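/- arXiv:math/0406099 — 5 statements merged into one kernel-verified Lean document; each statement's English description precedes it below -/
import Mathlib

section
/- For all real numbers α and β with β ≠ 0, the complex homogeneous cubic polynomial F = α(x₂³ + x₁²x₂ + x₀²x₂) + β(x₀x₂² + x₁³ + x₀³) in the variables x₀, x₁, x₂ has no singular point: there is no triple (x₀, x₁, x₂) ∈ ℂ³ \ {(0,0,0)} at which the three partial derivatives ∂F/∂x₀, ∂F/∂x₁, ∂F/∂x₂ all vanish simultaneously. In other words, every member of the real pencil of plane cubics spanned by x₂³ + x₁²x₂ + x₀²x₂ and x₀x₂² + x₁³ + x₀³, other than the member x₂³ + x₁²x₂ + x₀²x₂ itself (corresponding to β = 0), is a nonsingular complex plane cubic. -/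
open Complex

/-- The cubic `F_{α,β} = α(x₂³ + x₁²x₂ + x₀²x₂) + β(x₀x₂² + x₁³ + x₀³)` as a
complex polynomial function of the three variables. -/
noncomputable def Fcubic (α β : ℝ) (x₀ x₁ x₂ : ℂ) : ℂ :=
  (α : ℂ) * (x₂ ^ 3 + x₁ ^ 2 * x₂ + x₀ ^ 2 * x₂) +
    (β : ℂ) * (x₀ * x₂ ^ 2 + x₁ ^ 3 + x₀ ^ 3)

private lemma hasD0 (a b x₁ x₂ x₀ : ℂ) :
    HasDerivAt (fun t : ℂ => a * (x₂ ^ 3 + x₁ ^ 2 * x₂ + t ^ 2 * x₂) +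
      b * (t * x₂ ^ 2 + x₁ ^ 3 + t ^ 3))
      (a * (2 * x₀ * x₂) + b * (x₂ ^ 2 + 3 * x₀ ^ 2)) x₀ := by
  have h1 : HasDerivAt (fun t : ℂ => x₂ ^ 3 + x₁ ^ 2 * x₂ + t ^ 2 * x₂) (2 * x₀ * x₂) x₀ := by
    simpa using (((hasDerivAt_pow 2 x₀).mul_const x₂).const_add (x₂ ^ 3 + x₁ ^ 2 * x₂))
  have h2 : HasDerivAt (fun t : ℂ => t * x₂ ^ 2 + x₁ ^ 3 + t ^ 3) (x₂ ^ 2 + 3 * x₀ ^ 2) x₀ := by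
    simpa [Pi.add_def] using ((((hasDerivAt_id x₀).mul_const (x₂ ^ 2)).add_const (x₁ ^ 3)).add
      (hasDerivAt_pow 3 x₀))
  exact (h1.const_mul a).add (h2.const_mul b)

private lemma hasD1 (a b x₀ x₂ x₁ : ℂ) :
    HasDerivAt (fun t : ℂ => a * (x₂ ^ 3 + t ^ 2 * x₂ + x₀ ^ 2 * x₂) +
      b * (x₀ * x₂ ^ 2 + t ^ 3 + x₀ ^ 3))
      (a * (2 * x₁ * x₂) + b * (3 * x₁ ^ 2)) x₁ := by
  have h1 : HasDerivAt (fun t : ℂ => x₂ ^ 3 + t ^ 2 * x₂ + x₀ ^ 2 * x₂) (2 * x₁ * x₂) x₁ := by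
    simpa using ((((hasDerivAt_pow 2 x₁).mul_const x₂).const_add (x₂ ^ 3)).add_const
      (x₀ ^ 2 * x₂))
  have h2 : HasDerivAt (fun t : ℂ => x₀ * x₂ ^ 2 + t ^ 3 + x₀ ^ 3) (3 * x₁ ^ 2) x₁ := by
    simpa using (((hasDerivAt_pow 3 x₁).const_add (x₀ * x₂ ^ 2)).add_const (x₀ ^ 3))
  exact (h1.const_mul a).add (h2.const_mul b)

private lemma hasD2 (a b x₀ x₁ x₂ : ℂ) :
    HasDerivAt (fun t : ℂ => a * (t ^ 3 + x₁ ^ 2 * t + x₀ ^ 2 * t) +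
      b * (x₀ * t ^ 2 + x₁ ^ 3 + x₀ ^ 3))
      (a * (3 * x₂ ^ 2 + x₁ ^ 2 + x₀ ^ 2) + b * (2 * x₀ * x₂)) x₂ := by
  have h1 : HasDerivAt (fun t : ℂ => t ^ 3 + x₁ ^ 2 * t + x₀ ^ 2 * t)
      (3 * x₂ ^ 2 + x₁ ^ 2 + x₀ ^ 2) x₂ := by
    have h := ((hasDerivAt_pow 3 x₂).add ((hasDerivAt_id x₂).const_mul (x₁ ^ 2))).add
      ((hasDerivAt_id x₂).const_mul (x₀ ^ 2))
    simpa [Pi.add_def] using h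
  have h2 : HasDerivAt (fun t : ℂ => x₀ * t ^ 2 + x₁ ^ 3 + x₀ ^ 3) (2 * x₀ * x₂) x₂ := by
    have h := ((((hasDerivAt_pow 2 x₂).const_mul x₀).add_const (x₁ ^ 3)).add_const (x₀ ^ 3))
    refine h.congr_deriv ?_
    push_cast; ring
  exact (h1.const_mul a).add (h2.const_mul b)

/-- For all real `α`, `β` with `β ≠ 0`, the complex cubic
`F = α(x₂³ + x₁²x₂ + x₀²x₂) + β(x₀x₂² + x₁³ + x₀³)` has no singular point:
there is no nonzero triple in `ℂ³` at which all three partial derivatives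
of `F` vanish simultaneously. -/
theorem pencil_nonsingular_of_beta_ne_zero (α β : ℝ) (hβ : β ≠ 0) :
    ¬ ∃ x₀ x₁ x₂ : ℂ, (x₀, x₁, x₂) ≠ (0, 0, 0) ∧
      deriv (fun t => Fcubic α β t x₁ x₂) x₀ = 0 ∧
      deriv (fun t => Fcubic α β x₀ t x₂) x₁ = 0 ∧
      deriv (fun t => Fcubic α β x₀ x₁ t) x₂ = 0 := by
  rintro ⟨x₀, x₁, x₂, hne, h0, h1, h2⟩
  have hb : (β : ℂ) ≠ 0 := Complex.ofReal_ne_zero.2 hβ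
  have e0 : (α : ℂ) * (2 * x₀ * x₂) + (β : ℂ) * (x₂ ^ 2 + 3 * x₀ ^ 2) = 0 := by
    rw [← h0]; exact ((hasD0 (α : ℂ) (β : ℂ) x₁ x₂ x₀).deriv).symm
  have e1 : (α : ℂ) * (2 * x₁ * x₂) + (β : ℂ) * (3 * x₁ ^ 2) = 0 := by
    rw [← h1]; exact ((hasD1 (α : ℂ) (β : ℂ) x₀ x₂ x₁).deriv).symm
  have e2 : (α : ℂ) * (3 * x₂ ^ 2 + x₁ ^ 2 + x₀ ^ 2) + (β : ℂ) * (2 * x₀ * x₂) = 0 := by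
    rw [← h2]; exact ((hasD2 (α : ℂ) (β : ℂ) x₀ x₁ x₂).deriv).symm
  have hβ2 : (0 : ℝ) < β ^ 2 := lt_of_le_of_ne (sq_nonneg β) (Ne.symm (pow_ne_zero 2 hβ))
  by_cases hz : x₂ = 0
  · subst hz
    have hx0 : x₀ = 0 := by
      have h : (β : ℂ) * (3 * x₀ ^ 2) = 0 := by linear_combination e0
      have h' : x₀ ^ 2 = 0 := by
        rcases mul_eq_zero.1 h with h | h
        · exact absurd h hb
        · linear_combination h / 3
      exact (pow_eq_zero_iff two_ne_zero).1 h'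
    have hx1 : x₁ = 0 := by
      have h : (β : ℂ) * (3 * x₁ ^ 2) = 0 := by linear_combination e1
      have h' : x₁ ^ 2 = 0 := by
        rcases mul_eq_zero.1 h with h | h
        · exact absurd h hb
        · linear_combination h / 3
      exact (pow_eq_zero_iff two_ne_zero).1 h'
    exact hne (by simp [hx0, hx1])
  · have hx0 : x₀ = 0 := by
      have hfac : x₁ * (2 * (α : ℂ) * x₂ + 3 * (β : ℂ) * x₁) = 0 := by linear_combination e1
      rcases mul_eq_zero.1 hfac with hx1 | h3
      · -- x₁ = 0 : resultant certificate gives 12(α²+β²)² x₀ x₂² = 0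
        subst hx1
        have key : ((12 * (α ^ 2 + β ^ 2) ^ 2 : ℝ) : ℂ) * (x₀ * x₂ ^ 2) = 0 := by
          push_cast
          linear_combination
            (8 * (α:ℂ) * (β:ℂ) * x₀ * (3 * (β:ℂ)) + (6 * (β:ℂ)^2 - 2 * (α:ℂ)^2) * x₂ * (β:ℂ)) * e2
            - (8 * (α:ℂ) * (β:ℂ) * x₀ * (α:ℂ)
              + (6 * (β:ℂ)^2 - 2 * (α:ℂ)^2) * x₂ * (3 * (α:ℂ))) * e0
        have hc : (12 * (α ^ 2 + β ^ 2) ^ 2 : ℝ) ≠ 0 := by nlinarith [sq_nonneg α, sq_nonneg (α^2 + β^2)]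
        have := (mul_eq_zero.1 key).resolve_left (Complex.ofReal_ne_zero.2 hc)
        exact (mul_eq_zero.1 this).resolve_right (pow_ne_zero 2 hz)
      · -- 2αx₂ + 3βx₁ = 0 : second resultant certificate
        have key : ((36 * β ^ 2 * (8 * α ^ 6 + 63 * α ^ 4 * β ^ 2 + 54 * α ^ 2 * β ^ 4
            + 27 * β ^ 6) : ℝ) : ℂ) * (x₀ * x₂ ^ 2) = 0 := by
          push_cast
          linear_combination
            ((72*(α:ℂ)*(β:ℂ)^3 + 12*(α:ℂ)^3*(β:ℂ)) * x₀ * (3*(β:ℂ))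
              + (54*(β:ℂ)^4 - 18*(α:ℂ)^2*(β:ℂ)^2) * x₂ * (β:ℂ)) * (9*(β:ℂ)^2) * e2
            - ((72*(α:ℂ)*(β:ℂ)^3 + 12*(α:ℂ)^3*(β:ℂ)) * x₀ * (3*(β:ℂ))
              + (54*(β:ℂ)^4 - 18*(α:ℂ)^2*(β:ℂ)^2) * x₂ * (β:ℂ))
                * ((α:ℂ) * (3*(β:ℂ)*x₁ - 2*(α:ℂ)*x₂)) * h3
            - ((72*(α:ℂ)*(β:ℂ)^3 + 12*(α:ℂ)^3*(β:ℂ)) * x₀ * (9*(α:ℂ)*(β:ℂ)^2)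
              + (54*(β:ℂ)^4 - 18*(α:ℂ)^2*(β:ℂ)^2) * x₂
                * (27*(α:ℂ)*(β:ℂ)^2 + 4*(α:ℂ)^3)) * e0
        have hc : (36 * β ^ 2 * (8 * α ^ 6 + 63 * α ^ 4 * β ^ 2 + 54 * α ^ 2 * β ^ 4
            + 27 * β ^ 6) : ℝ) ≠ 0 := by
          nlinarith [sq_nonneg α, sq_nonneg (α^2), sq_nonneg (α^3), sq_nonneg (α*β), sq_nonneg (α^2*β), sq_nonneg (α*β^2), pow_pos hβ2 3]
        have := (mul_eq_zero.1 key).resolve_left (Complex.ofReal_ne_zero.2 hc)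
        exact (mul_eq_zero.1 this).resolve_right (pow_ne_zero 2 hz)
    -- now x₀ = 0, so e0 gives β x₂² = 0, contradicting x₂ ≠ 0 and β ≠ 0
    subst hx0
    have h : (β : ℂ) * x₂ ^ 2 = 0 := by linear_combination e0
    rcases mul_eq_zero.1 h with h | h
    · exact hb h
    · exact hz (pow_eq_zero_iff two_ne_zero |>.1 h)
end

section
/- For every (α, β) ∈ ℝ² \ {(0,0)}, the cubic F_{α,β} = α(x₂³ + x₁²x₂ + x₀²x₂) + β(x₀x₂² + x₁³ + x₀³) has no real singular point: there is no (x₀, x₁, x₂) ∈ ℝ³ \ {(0,0,0)} at which the three partial derivatives ∂F_{α,β}/∂x₀, ∂F_{α,β}/∂x₁, ∂F_{α,β}/∂x₂ all vanish simultaneously. That is, every member of the real pencil of cubics spanned by x₂³ + x₁²x₂ + x₀²x₂ and x₀x₂² + x₁³ + x₀³ is nonsingular at all of its real points. -/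
/-- The cubic `F_{α,β} = α(x₂³ + x₁²x₂ + x₀²x₂) + β(x₀x₂² + x₁³ + x₀³)` as a
real polynomial function of the three variables. -/
noncomputable def FcubicR (α β : ℝ) (x₀ x₁ x₂ : ℝ) : ℝ :=
  α * (x₂ ^ 3 + x₁ ^ 2 * x₂ + x₀ ^ 2 * x₂) +
    β * (x₀ * x₂ ^ 2 + x₁ ^ 3 + x₀ ^ 3)

private lemma cubic_deriv (a b c d x : ℝ) :
    deriv (fun t : ℝ => a * t ^ 3 + b * t ^ 2 + c * t + d) x
      = 3 * a * x ^ 2 + 2 * b * x + c := by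
  have h3 : HasDerivAt (fun t : ℝ => t ^ 3) (3 * x ^ 2) x := by
    simpa using hasDerivAt_pow 3 x
  have h2 : HasDerivAt (fun t : ℝ => t ^ 2) (2 * x) x := by
    simpa using hasDerivAt_pow 2 x
  have h1 : HasDerivAt (fun t : ℝ => t) 1 x := hasDerivAt_id x
  have h : HasDerivAt (fun t : ℝ => a * t ^ 3 + b * t ^ 2 + c * t + d)
      (3 * a * x ^ 2 + 2 * b * x + c) x := by
    have := ((h3.const_mul a).add (h2.const_mul b)).add
      ((h1.const_mul c).add (hasDerivAt_const x d))
    have hf : (fun t : ℝ => a * t ^ 3 + b * t ^ 2 + c * t + d)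
        = ((fun y : ℝ => a * y ^ 3) + fun y => b * y ^ 2) + ((fun y => c * y) + fun _ => d) := by
      funext t; simp only [Pi.add_apply]; ring
    rw [show (3 * a * x ^ 2 + 2 * b * x + c) = a * (3 * x ^ 2) + b * (2 * x) + (c * 1 + 0) by ring, hf]
    exact this
  exact h.deriv

/-- For every `(α, β) ∈ ℝ² \ {(0,0)}`, the cubic
`F_{α,β} = α(x₂³ + x₁²x₂ + x₀²x₂) + β(x₀x₂² + x₁³ + x₀³)` has no real singular
point: there is no `(x₀, x₁, x₂) ∈ ℝ³ \ {(0,0,0)}` at which the three partial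
derivatives of `F_{α,β}` all vanish simultaneously. -/
theorem pencil_no_real_singular_point (α β : ℝ) (hαβ : (α, β) ≠ (0, 0)) :
    ¬ ∃ x₀ x₁ x₂ : ℝ, (x₀, x₁, x₂) ≠ (0, 0, 0) ∧
      deriv (fun t => FcubicR α β t x₁ x₂) x₀ = 0 ∧
      deriv (fun t => FcubicR α β x₀ t x₂) x₁ = 0 ∧
      deriv (fun t => FcubicR α β x₀ x₁ t) x₂ = 0 := by
  rintro ⟨x₀, x₁, x₂, hx, h0, h1, h2⟩
  -- rewrite the three functions in standard cubic form and compute the derivatives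
  have e0 : (fun t => FcubicR α β t x₁ x₂)
      = (fun t : ℝ => β * t ^ 3 + (α * x₂) * t ^ 2 + (β * x₂ ^ 2) * t
          + (α * (x₂ ^ 3 + x₁ ^ 2 * x₂) + β * x₁ ^ 3)) := by
    funext t; simp only [FcubicR]; ring
  have e1 : (fun t => FcubicR α β x₀ t x₂)
      = (fun t : ℝ => β * t ^ 3 + (α * x₂) * t ^ 2 + (0 : ℝ) * t
          + (α * (x₂ ^ 3 + x₀ ^ 2 * x₂) + β * (x₀ * x₂ ^ 2 + x₀ ^ 3))) := by
    funext t; simp only [FcubicR]; ring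
  have e2 : (fun t => FcubicR α β x₀ x₁ t)
      = (fun t : ℝ => α * t ^ 3 + (β * x₀) * t ^ 2
          + (α * (x₁ ^ 2 + x₀ ^ 2)) * t + (β * (x₁ ^ 3 + x₀ ^ 3))) := by
    funext t; simp only [FcubicR]; ring
  rw [e0, cubic_deriv] at h0
  rw [e1, cubic_deriv] at h1
  rw [e2, cubic_deriv] at h2
  -- h0 : 3*β*x₀^2 + 2*(α*x₂)*x₀ + β*x₂^2 = 0
  -- h1 : 3*β*x₁^2 + 2*(α*x₂)*x₁ + 0 = 0
  -- h2 : 3*α*x₂^2 + 2*(β*x₀)*x₂ + α*(x₁^2+x₀^2) = 0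
  have hαβ' : α ≠ 0 ∨ β ≠ 0 := by
    by_contra h
    push_neg at h
    exact hαβ (by simp [h.1, h.2])
  by_cases hx2 : x₂ = 0
  · -- x₂ = 0 case
    subst hx2
    have hx01 : x₀ ≠ 0 ∨ x₁ ≠ 0 := by
      by_contra h
      push_neg at h
      exact hx (by simp [h.1, h.2])
    have hpos : 0 < x₁ ^ 2 + x₀ ^ 2 := by
      rcases hx01 with h | h
      · have := sq_pos_of_ne_zero h
        nlinarith [sq_nonneg x₁]
      · have := sq_pos_of_ne_zero h
        nlinarith [sq_nonneg x₀]
    have hα : α = 0 := by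
      have : α * (x₁ ^ 2 + x₀ ^ 2) = 0 := by linarith [h2]
      rcases mul_eq_zero.1 this with h | h
      · exact h
      · exact absurd h (ne_of_gt hpos)
    have hβ : β ≠ 0 := by
      rcases hαβ' with h | h
      · exact absurd hα h
      · exact h
    have hβ0 : β * x₀ ^ 2 = 0 := by linarith [h0]
    have hβ1 : β * x₁ ^ 2 = 0 := by linarith [h1]
    have hx0 : x₀ = 0 := by
      have := (mul_eq_zero.1 hβ0).resolve_left hβ
      exact pow_eq_zero_iff (n := 2) (by norm_num) |>.1 this
    have hx1 : x₁ = 0 := by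
      have := (mul_eq_zero.1 hβ1).resolve_left hβ
      exact pow_eq_zero_iff (n := 2) (by norm_num) |>.1 this
    exact hx (by simp [hx0, hx1])
  · -- x₂ ≠ 0
    have hx2sq : 0 < x₂ ^ 2 := sq_pos_of_ne_zero hx2
    by_cases hx1 : x₁ = 0
    · -- x₁ = 0 : linear system in α, β with negative determinant
      subst hx1
      have key : α * (x₀ ^ 2 + x₂ ^ 2) ^ 2 = 0 := by
        linear_combination (-(2 * x₀ * x₂) / 3) * h0 + ((3 * x₀ ^ 2 + x₂ ^ 2) / 3) * h2
      have hα : α = 0 := by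
        rcases mul_eq_zero.1 key with h | h
        · exact h
        · exfalso
          have hpos2 : 0 < (x₀ ^ 2 + x₂ ^ 2) ^ 2 := by positivity
          exact absurd h (ne_of_gt hpos2)
      have hβ : β ≠ 0 := by
        rcases hαβ' with h | h
        · exact absurd hα h
        · exact h
      have : β * (3 * x₀ ^ 2 + x₂ ^ 2) = 0 := by
        linear_combination h0 - 2 * x₀ * x₂ * hα
      rcases mul_eq_zero.1 this with h | h
      · exact hβ h
      · have : 0 < 3 * x₀ ^ 2 + x₂ ^ 2 := by positivity
        linarith
    · -- x₁ ≠ 0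
      have hrel : 2 * α * x₂ + 3 * β * x₁ = 0 := by
        have : x₁ * (3 * β * x₁ + 2 * (α * x₂)) = 0 := by linear_combination h1
        have h := (mul_eq_zero.1 this).resolve_left hx1
        linarith
      have hβ : β ≠ 0 := by
        intro hb
        have hα : α ≠ 0 := hαβ'.resolve_right (by simp [hb])
        have : 2 * α * x₂ = 0 := by rw [hb] at hrel; linarith
        rcases mul_eq_zero.1 this with h | h
        · rcases mul_eq_zero.1 h with h' | h'
          · norm_num at h'
          · exact hα h'
        · exact hx2 h
      have hsq : β * (x₂ ^ 2 - 3 * x₀ * x₁ + 3 * x₀ ^ 2) = 0 := by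
        linear_combination h0 - x₀ * hrel
      have hsq' : x₂ ^ 2 = 3 * x₀ * x₁ - 3 * x₀ ^ 2 := by
        have := (mul_eq_zero.1 hsq).resolve_left hβ
        linarith
      have hp : β * (x₁ ^ 3 + 9 * x₀ * x₁ ^ 2 - 12 * x₀ ^ 2 * x₁ + 4 * x₀ ^ 3) = 0 := by
        linear_combination (-(2 * x₂) / 3) * h2
          + ((3 * x₂ ^ 2 + x₁ ^ 2 + x₀ ^ 2) / 3) * hrel
          + ((4 * x₀ - 9 * x₁) / 3) * hsq
      have hp' : x₁ ^ 3 + 9 * x₀ * x₁ ^ 2 - 12 * x₀ ^ 2 * x₁ + 4 * x₀ ^ 3 = 0 :=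
        (mul_eq_zero.1 hp).resolve_left hβ
      have hpos : 0 < x₀ * (x₁ - x₀) := by nlinarith [hx2sq, hsq']
      have hx0 : x₀ ≠ 0 := by
        intro h
        rw [h] at hpos
        simp at hpos
      have hkey : 0 < x₀ * (x₁ ^ 3 + 9 * x₀ * x₁ ^ 2 - 12 * x₀ ^ 2 * x₁ + 4 * x₀ ^ 3) := by
        nlinarith [mul_pos hpos hpos, mul_nonneg hpos.le (sq_nonneg (x₁ - x₀)),
          mul_nonneg (sq_nonneg x₀) hpos.le, pow_pos (sq_pos_of_ne_zero hx0) 2,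
          sq_pos_of_ne_zero hx0]
      rw [hp'] at hkey
      simp at hkey
end

section
/- Let m be an odd positive integer, k a positive integer, λ ∈ ℝ \ {0}, and μ ∈ ℂ with Re(μ) ≠ 0 and Im(μ) ≠ 0. Then the set of triples (a, b, c) ∈ ℝ³ with a ≠ 0, b ≠ 0, c ≠ 0 satisfying the two equations a = λ·b·(c² + 1)^k and a·(i − c)^m = μ (where i = √−1, and the second equation is an equation of complex numbers) is finite and has exactly m elements. -/
open Complex

/-- The set of triples `(a, b, c)` of nonzero real numbers satisfying
`a = λ·b·(c² + 1)^k` (an equation of real numbers) and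
`a·(i − c)^m = μ` (an equation of complex numbers). -/
def stmt3Set (m k : ℕ) (lam : ℝ) (μ : ℂ) : Set (ℝ × ℝ × ℝ) :=
  {p | p.1 ≠ 0 ∧ p.2.1 ≠ 0 ∧ p.2.2 ≠ 0 ∧
    p.1 = lam * p.2.1 * (p.2.2 ^ 2 + 1) ^ k ∧
    (p.1 : ℂ) * (I - (p.2.2 : ℂ)) ^ m = μ}

/-- Every real number has a real `m`-th root when `m` is odd. -/
lemma odd_pow_surj {m : ℕ} (hm : Odd m) (a : ℝ) : ∃ t : ℝ, t ^ m = a := by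
  have hm0 : m ≠ 0 := by rintro rfl; simp at hm
  rcases le_or_gt 0 a with ha | ha
  · refine ⟨a ^ (m⁻¹ : ℝ), ?_⟩
    rw [← Real.rpow_natCast (a ^ (m⁻¹ : ℝ)) m, ← Real.rpow_mul ha,
      inv_mul_cancel₀ (by exact_mod_cast hm0), Real.rpow_one]
  · have ha' : (0 : ℝ) ≤ -a := by linarith
    refine ⟨-((-a) ^ (m⁻¹ : ℝ)), ?_⟩
    rw [hm.neg_pow, ← Real.rpow_natCast ((-a) ^ (m⁻¹ : ℝ)) m, ← Real.rpow_mul ha',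
      inv_mul_cancel₀ (by exact_mod_cast hm0), Real.rpow_one, neg_neg]

/-- Let `m` be an odd positive integer, `k` a positive integer, `λ` a nonzero
real number, and `μ` a complex number with nonzero real and imaginary parts.
Then the set of triples `(a, b, c) ∈ (ℝ*)³` with `a = λ·b·(c² + 1)^k` and
`a·(i − c)^m = μ` is finite and has exactly `m` elements. -/
theorem stmt3_count (m k : ℕ) (hmodd : Odd m) (hm : 0 < m) (hk : 0 < k)
    (lam : ℝ) (hlam : lam ≠ 0) (μ : ℂ) (hre : μ.re ≠ 0) (him : μ.im ≠ 0) :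
    (stmt3Set m k lam μ).Finite ∧ (stmt3Set m k lam μ).ncard = m := by
  classical
  have hμ : μ ≠ 0 := fun h => hre (by simp [h])
  set R : Set ℂ := {z : ℂ | z ^ m = μ} with hRdef
  set f : ℂ → ℝ × ℝ × ℝ := fun z =>
    (z.im ^ m, z.im ^ m / (lam * ((-z.re / z.im) ^ 2 + 1) ^ k), -z.re / z.im) with hfdef
  -- every m-th root of μ has nonzero imaginary part
  have himz : ∀ z ∈ R, z.im ≠ 0 := by
    intro z hz h
    have hzm : z ^ m = μ := hz
    have hz' : z = (z.re : ℂ) := by apply Complex.ext <;> simp [h]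
    have h1 : μ = ((z.re ^ m : ℝ) : ℂ) := by
      rw [← hzm]
      conv_lhs => rw [hz']
      push_cast
      ring
    exact him (by rw [h1]; exact Complex.ofReal_im _)
  -- every m-th root of μ has nonzero real part
  have hrez : ∀ z ∈ R, z.re ≠ 0 := by
    intro z hz h
    have hzm : z ^ m = μ := hz
    obtain ⟨j, hj⟩ := hmodd
    have hz' : z = (z.im : ℂ) * I := by apply Complex.ext <;> simp [h]
    have h1 : μ = ((z.im ^ m * (-1) ^ j : ℝ) : ℂ) * I := by
      rw [← hzm]
      conv_lhs => rw [hz']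
      rw [mul_pow, hj, pow_succ I, pow_mul, Complex.I_sq]
      push_cast
      ring
    refine hre ?_
    rw [h1]
    simp only [Complex.mul_re, Complex.ofReal_re, Complex.ofReal_im, Complex.I_re, Complex.I_im]
    ring
  -- key reconstruction identity
  have key : ∀ z : ℂ, z.im ≠ 0 →
      ((z.im : ℂ)) * (I - ((-z.re / z.im : ℝ) : ℂ)) = z := by
    intro z hz
    apply Complex.ext
    · simp only [Complex.mul_re, Complex.ofReal_re, Complex.ofReal_im, Complex.sub_re,
        Complex.I_re, Complex.sub_im, Complex.I_im]
      field_simp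
      ring
    · simp only [Complex.mul_im, Complex.ofReal_re, Complex.ofReal_im, Complex.sub_re,
        Complex.I_re, Complex.sub_im, Complex.I_im]
      ring
  -- the solution set is the image of R under f
  have himg : stmt3Set m k lam μ = f '' R := by
    ext p
    constructor
    · rintro ⟨ha, hb, hc, heq, hCeq⟩
      obtain ⟨a, b, c⟩ := p
      simp only at ha hb hc heq hCeq
      obtain ⟨t, ht⟩ := odd_pow_surj hmodd a
      have ht0 : t ≠ 0 := by
        intro h; rw [h, zero_pow hm.ne'] at ht; exact ha ht.symm
      refine ⟨(t : ℂ) * (I - (c : ℂ)), ?_, ?_⟩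
      · show ((t : ℂ) * (I - (c : ℂ))) ^ m = μ
        rw [mul_pow, ← Complex.ofReal_pow, ht, hCeq]
      · have hre' : ((t : ℂ) * (I - (c : ℂ))).re = -(t * c) := by simp
        have him' : ((t : ℂ) * (I - (c : ℂ))).im = t := by simp
        have hcval : - -(t * c) / t = c := by
          rw [neg_neg]; field_simp
        have hpos : (0 : ℝ) < c ^ 2 + 1 := by positivity
        have hb' : a / (lam * (c ^ 2 + 1) ^ k) = b := by
          rw [heq]; field_simp
        simp only [hfdef]
        rw [hre', him', hcval, ht, hb']
    · rintro ⟨z, hz, rfl⟩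
      have hzm : z ^ m = μ := hz
      have ht := himz z hz
      have hr := hrez z hz
      have hcne : -z.re / z.im ≠ 0 := div_ne_zero (neg_ne_zero.2 hr) ht
      have hane : z.im ^ m ≠ 0 := pow_ne_zero _ ht
      have hpos : (0 : ℝ) < (-z.re / z.im) ^ 2 + 1 := by positivity
      have hXne : lam * ((-z.re / z.im) ^ 2 + 1) ^ k ≠ 0 :=
        mul_ne_zero hlam (pow_ne_zero _ hpos.ne')
      refine ⟨hane, div_ne_zero hane hXne, hcne, ?_, ?_⟩
      · show z.im ^ m = lam * (z.im ^ m / (lam * ((-z.re / z.im) ^ 2 + 1) ^ k)) *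
          ((-z.re / z.im) ^ 2 + 1) ^ k
        field_simp
      · show ((z.im ^ m : ℝ) : ℂ) * (I - ((-z.re / z.im : ℝ) : ℂ)) ^ m = μ
        rw [Complex.ofReal_pow, ← mul_pow, key z ht]
        exact hzm
  -- f is injective on R
  have hinj : Set.InjOn f R := by
    intro z1 h1 z2 h2 hfz
    have ht1 := himz z1 h1
    have ht2 := himz z2 h2
    have heq1 : z1.im ^ m = z2.im ^ m := congrArg Prod.fst hfz
    have him12 : z1.im = z2.im := hmodd.strictMono_pow.injective heq1
    have heq3 : -z1.re / z1.im = -z2.re / z2.im :=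
      congrArg (fun p => p.2.2) hfz
    rw [him12] at heq3
    have hre12 : z1.re = z2.re := by
      field_simp at heq3
      linarith
    exact Complex.ext hre12 him12
  -- R is the coercion of a finset of cardinality m
  have hprim := Complex.isPrimitiveRoot_exp m hm.ne'
  set s : Finset ℂ := (Polynomial.nthRoots m μ).toFinset with hsdef
  have hnodup : (Polynomial.nthRoots m μ).Nodup := hprim.nthRoots_nodup hμ
  have hscard : s.card = m := by
    rw [hsdef, Multiset.toFinset_card_of_nodup hnodup, hprim.card_nthRoots μ,
      if_pos (IsAlgClosed.exists_pow_nat_eq μ hm)]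
  have hRs : R = ↑s := by
    ext z
    simp [hRdef, hsdef, Polynomial.mem_nthRoots hm]
  have hRfin : R.Finite := by rw [hRs]; exact s.finite_toSet
  have hRcard : R.ncard = m := by rw [hRs, Set.ncard_coe_finset, hscard]
  constructor
  · rw [himg]; exact hRfin.image f
  · rw [himg, Set.ncard_image_of_injOn hinj, hRcard]
end

section
/- Let m₁ and m₂ be odd positive integers and m₃ an even positive integer with m₂ < m₃ and m₁ < m₃. Then there exists an open subset U of ℂ², dense in ℂ² and contained in (ℂ \ ℝ) × (ℂ \ ℝ), such that for every (ξ, η) ∈ U the set of triples (a, b, τ) ∈ ℝ × ℝ × ℂ satisfying a·τ^{m₁} = ξ and b·τ^{m₂}·(τ − 1)^{m₃ − m₂} = η is finite and has exactly m₁·(m₃ − m₂) elements. -/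
open Complex Real

/-- The set of triples `(a, b, τ) ∈ ℝ × ℝ × ℂ` with `a·τ^{m₁} = ξ` and
`b·τ^{m₂}·(τ − 1)^{m₃ − m₂} = η`. -/
def stmt4Set (m₁ m₂ m₃ : ℕ) (ξ η : ℂ) : Set (ℝ × ℝ × ℂ) :=
  {q | (q.1 : ℂ) * q.2.2 ^ m₁ = ξ ∧
    (q.2.1 : ℂ) * q.2.2 ^ m₂ * (q.2.2 - 1) ^ (m₃ - m₂) = η}

noncomputable def rayDir (m k : ℕ) : ℂ := Complex.exp ((↑(π * k / m : ℝ)) * Complex.I)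

lemma rayDir_ne_zero (m k : ℕ) : rayDir m k ≠ 0 := Complex.exp_ne_zero _

lemma ofReal_mul_im' (r : ℝ) (z : ℂ) : ((r : ℂ) * z).im = r * z.im := by
  simp [Complex.mul_im]

lemma rayDir_pow {m : ℕ} (hm : 0 < m) (k : ℕ) : rayDir m k ^ m = (-1 : ℂ) ^ k := by
  rw [rayDir, ← Complex.exp_nat_mul]
  have hm' : (m : ℂ) ≠ 0 := Nat.cast_ne_zero.mpr hm.ne'
  have h : (m : ℂ) * ((↑(π * k / m : ℝ)) * I) = (k : ℂ) * (π * I) := by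
    push_cast
    field_simp
  rw [h, Complex.exp_nat_mul, Complex.exp_pi_mul_I]

lemma exp_int_pi (q : ℤ) : Complex.exp ((q : ℂ) * (↑π * I)) = (-1 : ℂ) ^ q := by
  rw [Complex.exp_int_mul, Complex.exp_pi_mul_I]

lemma im_ne_zero_ne_zero {z : ℂ} (h : z.im ≠ 0) : z ≠ 0 := by
  intro h0; rw [h0] at h; simp at h

lemma ray_lemma {m : ℕ} (hm : 0 < m) {z : ℂ} (hz : z ≠ 0) (h : (z ^ m).im = 0) :
    ∃ (r : ℝ) (k : ℕ), k < m ∧ r ≠ 0 ∧ z = (r : ℂ) * rayDir m k := by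
  have habs : ‖z‖ ≠ 0 := by simpa using hz
  have hz1 : z = (‖z‖ : ℂ) * Complex.exp ((z.arg : ℂ) * I) :=
    (Complex.norm_mul_exp_arg_mul_I z).symm
  have hpow : z ^ m = ((‖z‖ ^ m : ℝ) : ℂ)
      * Complex.exp ((↑(m * z.arg : ℝ)) * I) := by
    conv_lhs => rw [hz1]
    rw [mul_pow, ← Complex.exp_nat_mul]
    push_cast
    ring_nf
  have him : Real.sin (m * z.arg) = 0 := by
    have h2 : (z ^ m).im = ‖z‖ ^ m * Real.sin (m * z.arg) := by
      rw [hpow, ofReal_mul_im', Complex.exp_ofReal_mul_I_im]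
    rw [h2] at h
    rcases mul_eq_zero.mp h with h' | h'
    · exact absurd h' (pow_ne_zero _ habs)
    · exact h'
  obtain ⟨ℓ, hℓ⟩ := Real.sin_eq_zero_iff.mp him
  set q : ℤ := ℓ / m with hq
  set k0 : ℤ := ℓ % m with hk0
  have hmZ : (0 : ℤ) < (m : ℤ) := by exact_mod_cast hm
  have hk0nn : 0 ≤ k0 := Int.emod_nonneg ℓ (by exact_mod_cast hm.ne')
  have hk0lt : k0 < m := Int.emod_lt_of_pos ℓ hmZ
  set k : ℕ := k0.toNat with hk
  have hkk0 : (k : ℤ) = k0 := Int.toNat_of_nonneg hk0nn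
  have hkm : k < m := by omega
  have hmR : (m : ℝ) ≠ 0 := Nat.cast_ne_zero.mpr hm.ne'
  have harg : z.arg = q * π + π * k / m := by
    have h1 : (m : ℝ) * z.arg = ℓ * π := hℓ.symm
    have h2 : (ℓ : ℝ) = q * m + k :=
      mod_cast congrArg (Int.cast : ℤ → ℝ)
        (by have h3 : (m : ℤ) * q + k0 = ℓ := Int.mul_ediv_add_emod ℓ m
            rw [hkk0]; linarith : ℓ = q * (m : ℤ) + (k : ℤ))
    field_simp
    linear_combination h1 + π * h2
  have hexp : Complex.exp ((z.arg : ℂ) * I) = (-1 : ℂ) ^ q * rayDir m k := by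
    rw [harg, rayDir]
    push_cast
    rw [show (((q : ℂ) * π + π * k / m) * I : ℂ)
        = (q : ℂ) * (↑π * I) + (↑(π * k / m : ℝ) : ℂ) * I by push_cast; ring,
      Complex.exp_add, exp_int_pi]
    congr 2
    push_cast
    ring
  refine ⟨(-1 : ℝ) ^ q * ‖z‖, k, hkm, ?_, ?_⟩
  · exact mul_ne_zero (zpow_ne_zero _ (by norm_num)) habs
  · conv_lhs => rw [hz1, hexp]
    push_cast
    ring

lemma rayDir_inj {m : ℕ} (hm : 0 < m) {r r' : ℝ} (hr : r ≠ 0) {k k' : ℕ}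
    (hk : k < m) (hk' : k' < m)
    (h : (r : ℂ) * rayDir m k = (r' : ℂ) * rayDir m k') : k = k' := by
  have hmR : (m : ℝ) ≠ 0 := Nat.cast_ne_zero.mpr hm.ne'
  have key : (r : ℂ) * Complex.exp ((↑(π * k / m - π * k' / m : ℝ)) * I) = (r' : ℂ) := by
    apply mul_right_cancel₀ (Complex.exp_ne_zero ((↑(π * k' / m : ℝ) : ℂ) * I))
    rw [mul_assoc, ← Complex.exp_add,
      show (↑(π * k / m - π * k' / m : ℝ) : ℂ) * I + (↑(π * k' / m : ℝ) : ℂ) * I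
        = (↑(π * k / m : ℝ) : ℂ) * I by push_cast; ring]
    exact h
  have him : Real.sin (π * k / m - π * k' / m) = 0 := by
    have h2 := congrArg Complex.im key
    rw [ofReal_mul_im', Complex.exp_ofReal_mul_I_im, Complex.ofReal_im] at h2
    rcases mul_eq_zero.mp h2 with h' | h'
    · exact absurd h' hr
    · exact h'
  obtain ⟨ℓ, hℓ⟩ := Real.sin_eq_zero_iff.mp him
  have hℝ : (ℓ : ℝ) * m = (k : ℝ) - k' := by
    apply mul_left_cancel₀ Real.pi_ne_zero
    field_simp at hℓ
    linear_combination π * hℓ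
  have hcast : ℓ * (m : ℤ) = (k : ℤ) - k' := by exact_mod_cast hℝ
  have hkZ : (k : ℤ) < m := by exact_mod_cast hk
  have hk'Z : (k' : ℤ) < m := by exact_mod_cast hk'
  have hmZ : (0 : ℤ) < m := by exact_mod_cast hm
  have hℓ0 : ℓ = 0 := by
    rcases lt_trichotomy ℓ 0 with h0 | h0 | h0
    · nlinarith
    · exact h0
    · nlinarith
  rw [hℓ0] at hcast
  omega

lemma colinear_of_conj_mul_im {e u : ℂ} (he : e ≠ 0)
    (h : ((starRingEnd ℂ) e * u).im = 0) :
    u = (↑(((starRingEnd ℂ) e * u).re / Complex.normSq e) : ℂ) * e := by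
  have hns : Complex.normSq e ≠ 0 := by
    intro h0; exact he (by simpa using Complex.normSq_pos.not.mp (by rw [h0]; simp))
  have h1 : (starRingEnd ℂ) e * u = ((((starRingEnd ℂ) e * u).re : ℝ) : ℂ) :=
    Complex.ext rfl (by simpa using h)
  have h2 : u * ((Complex.normSq e : ℝ) : ℂ)
      = ((((starRingEnd ℂ) e * u).re : ℝ) : ℂ) * e := by
    rw [Complex.normSq_eq_conj_mul_self, ← h1]; ring
  have hns' : ((Complex.normSq e : ℝ) : ℂ) ≠ 0 := Complex.ofReal_ne_zero.mpr hns
  rw [Complex.ofReal_div, div_mul_eq_mul_div, eq_div_iff hns']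
  linear_combination h2

lemma line_im (e v : ℂ) (s : ℝ) :
    ((starRingEnd ℂ) e * ((s : ℂ) * v - 1)).im
      = s * ((starRingEnd ℂ) e * v).im - ((starRingEnd ℂ) e).im := by
  simp [mul_sub, Complex.sub_im, Complex.mul_im, Complex.ofReal_re, Complex.ofReal_im]
  ring

lemma neg_one_pow_mul_self {R : Type*} [Monoid R] [HasDistribNeg R] (t : ℕ) :
    (-1 : R) ^ t * (-1 : R) ^ t = 1 := by
  rw [← pow_add, ← two_mul, pow_mul, neg_one_sq, one_pow]


lemma conj_neg_one_im (η : ℂ) : ((starRingEnd ℂ) η * (-1)).im = η.im := by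
  simp

lemma scale_im (α x : ℂ) (t : ℝ) (m : ℕ) :
    ((starRingEnd ℂ) α * ((t : ℂ) * x) ^ m).im
      = t ^ m * ((starRingEnd ℂ) α * x ^ m).im := by
  rw [mul_pow, ← Complex.ofReal_pow, mul_left_comm, ofReal_mul_im']

lemma dense_conj_mul_im_ne (z : ℂ) (hz : z ≠ 0) :
    Dense {η : ℂ | ((starRingEnd ℂ) η * z).im ≠ 0} := by
  rw [Metric.dense_iff]
  intro x r hr
  by_cases h : ((starRingEnd ℂ) x * z).im ≠ 0
  · exact ⟨x, Metric.mem_ball_self hr, h⟩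
  push_neg at h
  set d : ℂ := (starRingEnd ℂ) (I * z⁻¹) with hd
  have hdz : (starRingEnd ℂ) d * z = I := by
    rw [hd, Complex.conj_conj]
    field_simp
  set t : ℝ := r / 2 / (‖d‖ + 1) with ht
  have habs : (0:ℝ) < ‖d‖ + 1 := by positivity
  have htpos : 0 < t := by positivity
  refine ⟨x + (t : ℂ) * d, ?_, ?_⟩
  · rw [Metric.mem_ball, Complex.dist_eq, add_sub_cancel_left]
    have h2 : ‖(t:ℂ) * d‖ = t * ‖d‖ := by
      rw [norm_mul, Complex.norm_real, Real.norm_eq_abs, abs_of_pos htpos]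
    rw [h2]
    calc t * ‖d‖ ≤ t * (‖d‖ + 1) := by nlinarith [norm_nonneg d]
      _ = r / 2 := by rw [ht, div_mul_cancel₀ _ habs.ne']
      _ < r := by linarith
  · show ((starRingEnd ℂ) (x + (t:ℂ) * d) * z).im ≠ 0
    rw [map_add, add_mul, map_mul, Complex.conj_ofReal, mul_assoc, hdz]
    rw [Complex.add_im, h, ofReal_mul_im']
    simpa using htpos.ne'

lemma isOpen_conj_mul_im_ne (z : ℂ) :
    IsOpen {η : ℂ | ((starRingEnd ℂ) η * z).im ≠ 0} := by
  have : Continuous fun η : ℂ => ((starRingEnd ℂ) η * z).im :=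
    Complex.continuous_im.comp ((Complex.continuous_conj).mul continuous_const)
  exact isOpen_ne.preimage this

lemma dense_isOpen_list (L : List ℂ) (hL : ∀ z ∈ L, z ≠ 0) :
    Dense {η : ℂ | ∀ z ∈ L, ((starRingEnd ℂ) η * z).im ≠ 0} ∧
      IsOpen {η : ℂ | ∀ z ∈ L, ((starRingEnd ℂ) η * z).im ≠ 0} := by
  induction L with
  | nil => simp only [List.not_mem_nil, IsEmpty.forall_iff, forall_const, Set.setOf_true]; exact ⟨dense_univ, isOpen_univ⟩
  | cons a L ih =>
    have ha : a ≠ 0 := hL a List.mem_cons_self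
    obtain ⟨ihd, iho⟩ := ih fun z hz => hL z (List.mem_cons_of_mem a hz)
    have hset : {η : ℂ | ∀ z ∈ a :: L, ((starRingEnd ℂ) η * z).im ≠ 0}
        = {η : ℂ | ((starRingEnd ℂ) η * a).im ≠ 0} ∩
          {η : ℂ | ∀ z ∈ L, ((starRingEnd ℂ) η * z).im ≠ 0} := by
      ext η; simp [List.mem_cons, or_imp, forall_and]
    rw [hset]
    exact ⟨(dense_conj_mul_im_ne a ha).inter_of_isOpen_left ihd (isOpen_conj_mul_im_ne a),
      (isOpen_conj_mul_im_ne a).inter iho⟩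


lemma counting (m₁ m₂ m₃ : ℕ) (h₁pos : 0 < m₁) (h₂₃ : m₂ < m₃) (ξ η : ℂ)
    (hξ : ξ.im ≠ 0) (hη : η.im ≠ 0)
    (hW : ∀ v : ℂ, v ≠ 0 → ((starRingEnd ℂ) ξ * v ^ m₁).im = 0 →
      ((starRingEnd ℂ) η * v ^ m₂).im ≠ 0 ∧ ((starRingEnd ℂ) η * v ^ m₃).im ≠ 0) :
    ∃ F : Fin m₁ × Fin (m₃ - m₂) → ℝ × ℝ × ℂ,
      Function.Injective F ∧ stmt4Set m₁ m₂ m₃ ξ η = Set.range F := by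
  set n := m₃ - m₂ with hn
  have hnpos : 0 < n := by omega
  have hmn : m₂ + n = m₃ := by omega
  have hξ0 : ξ ≠ 0 := im_ne_zero_ne_zero hξ
  have hη0 : η ≠ 0 := im_ne_zero_ne_zero hη
  obtain ⟨w, hw⟩ := IsAlgClosed.exists_pow_nat_eq ξ h₁pos
  have hw0 : w ≠ 0 := by
    intro h; rw [h, zero_pow h₁pos.ne'] at hw; exact hξ0 hw.symm
  set v : Fin m₁ → ℂ := fun k => w * rayDir m₁ k with hv
  have hv0 : ∀ k, v k ≠ 0 := fun k => mul_ne_zero hw0 (rayDir_ne_zero _ _)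
  have hvpow : ∀ k : Fin m₁, v k ^ m₁ = (-1 : ℂ) ^ (k : ℕ) * ξ := by
    intro k
    rw [hv]
    simp only
    rw [mul_pow, hw, rayDir_pow h₁pos]
    ring
  have hvim : ∀ k : Fin m₁, ((starRingEnd ℂ) ξ * v k ^ m₁).im = 0 := by
    intro k
    rw [hvpow k, show (starRingEnd ℂ) ξ * ((-1 : ℂ) ^ (k : ℕ) * ξ)
        = (-1 : ℂ) ^ (k : ℕ) * ((starRingEnd ℂ) ξ * ξ) from by ring,
      ← Complex.normSq_eq_conj_mul_self,
      show ((-1 : ℂ) ^ (k : ℕ) * ((Complex.normSq ξ : ℝ) : ℂ))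
        = ((((-1 : ℝ) ^ (k : ℕ) * Complex.normSq ξ : ℝ)) : ℂ) from by push_cast; ring,
      Complex.ofReal_im]
  have hW2 : ∀ k : Fin m₁, ((starRingEnd ℂ) η * v k ^ m₂).im ≠ 0 :=
    fun k => (hW (v k) (hv0 k) (hvim k)).1
  have hW3 : ∀ k : Fin m₁, ((starRingEnd ℂ) η * v k ^ m₃).im ≠ 0 :=
    fun k => (hW (v k) (hv0 k) (hvim k)).2
  set c : Fin m₁ → ℂ := fun k => (starRingEnd ℂ) η * v k ^ m₂ with hc
  have hc0 : ∀ k, c k ≠ 0 := fun k => im_ne_zero_ne_zero (hW2 k)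
  have hdex : ∀ k : Fin m₁, ∃ dk : ℂ, dk ^ n = (starRingEnd ℂ) (c k) :=
    fun k => IsAlgClosed.exists_pow_nat_eq _ hnpos
  choose d hd using hdex
  have hd0 : ∀ k, d k ≠ 0 := by
    intro k h
    have h2 := hd k
    rw [h, zero_pow hnpos.ne'] at h2
    exact hc0 k (by simpa [map_eq_zero] using h2.symm)
  set e : Fin m₁ → Fin n → ℂ := fun k j => d k * rayDir n j with he
  have he0 : ∀ k j, e k j ≠ 0 := fun k j => mul_ne_zero (hd0 k) (rayDir_ne_zero _ _)
  have hepow : ∀ (k : Fin m₁) (j : Fin n),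
      e k j ^ n = (-1 : ℂ) ^ (j : ℕ) * (starRingEnd ℂ) (c k) := by
    intro k j
    rw [he]
    simp only
    rw [mul_pow, hd, rayDir_pow hnpos]
    ring
  have hvnr : ∀ k : Fin m₁, (v k).im ≠ 0 := by
    intro k h
    apply hξ
    have hvr : v k = (((v k).re : ℝ) : ℂ) := Complex.ext rfl (by simpa using h)
    have hx : ξ = (-1 : ℂ) ^ (k : ℕ) * v k ^ m₁ := by
      rw [hvpow k, ← mul_assoc, neg_one_pow_mul_self, one_mul]
    rw [hx, hvr, show ((-1 : ℂ) ^ (k : ℕ) * (((v k).re : ℝ) : ℂ) ^ m₁)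
      = ((((-1 : ℝ) ^ (k : ℕ) * (v k).re ^ m₁ : ℝ)) : ℂ) from by push_cast; ring,
      Complex.ofReal_im]
  have hnum : ∀ (k : Fin m₁) (j : Fin n), (e k j).im ≠ 0 := by
    intro k j h
    apply hW2 k
    have her : e k j = (((e k j).re : ℝ) : ℂ) := Complex.ext rfl (by simpa using h)
    have h1 : (starRingEnd ℂ) (c k)
        = (-1 : ℂ) ^ (j : ℕ) * (((e k j).re ^ n : ℝ) : ℂ) := by
      have h2 := hepow k j
      rw [her] at h2
      calc (starRingEnd ℂ) (c k)
          = (-1 : ℂ) ^ (j : ℕ) * ((-1 : ℂ) ^ (j : ℕ) * (starRingEnd ℂ) (c k)) := by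
            rw [← mul_assoc, neg_one_pow_mul_self, one_mul]
        _ = (-1 : ℂ) ^ (j : ℕ) * (((e k j).re ^ n : ℝ) : ℂ) := by
            rw [← h2]; push_cast; ring
    have h3 : ((starRingEnd ℂ) (c k)).im = 0 := by
      rw [h1, show ((-1 : ℂ) ^ (j : ℕ) * (((e k j).re ^ n : ℝ) : ℂ))
        = ((((-1 : ℝ) ^ (j : ℕ) * (e k j).re ^ n : ℝ)) : ℂ) from by push_cast; ring,
        Complex.ofReal_im]
    have h4 : (c k).im = 0 := by
      have := Complex.conj_im (c k)
      rw [h3] at this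
      linarith
    rw [hc] at h4
    exact h4
  have hden : ∀ (k : Fin m₁) (j : Fin n), ((starRingEnd ℂ) (e k j) * v k).im ≠ 0 := by
    intro k j h
    apply hW3 k
    have hu := colinear_of_conj_mul_im (he0 k j) h
    set ρ : ℝ := ((starRingEnd ℂ) (e k j) * v k).re / Complex.normSq (e k j) with hρ
    have hvm : v k ^ m₃ = v k ^ m₂ * v k ^ n := by rw [← pow_add, hmn]
    have hkey : (starRingEnd ℂ) η * v k ^ m₃
        = (-1 : ℂ) ^ (j : ℕ) * (((ρ ^ n * Complex.normSq (c k) : ℝ)) : ℂ) := by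
      calc (starRingEnd ℂ) η * v k ^ m₃
          = c k * ((ρ : ℂ) * e k j) ^ n := by rw [hvm, ← hu, hc]; ring
        _ = ((ρ ^ n : ℝ) : ℂ) * (c k * e k j ^ n) := by push_cast; ring
        _ = ((ρ ^ n : ℝ) : ℂ) * ((-1 : ℂ) ^ (j : ℕ) * (c k * (starRingEnd ℂ) (c k))) := by
            rw [hepow k j]; ring
        _ = (-1 : ℂ) ^ (j : ℕ) * (((ρ ^ n * Complex.normSq (c k) : ℝ)) : ℂ) := by
            rw [Complex.mul_conj]; push_cast; ring
    rw [hkey, show ((-1 : ℂ) ^ (j : ℕ) * (((ρ ^ n * Complex.normSq (c k) : ℝ)) : ℂ))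
      = ((((-1 : ℝ) ^ (j : ℕ) * (ρ ^ n * Complex.normSq (c k)) : ℝ)) : ℂ) from by
        push_cast; ring, Complex.ofReal_im]
  set s : Fin m₁ → Fin n → ℝ := fun k j =>
    ((starRingEnd ℂ) (e k j)).im / ((starRingEnd ℂ) (e k j) * v k).im with hs
  have hs0 : ∀ k j, s k j ≠ 0 := by
    intro k j
    apply div_ne_zero _ (hden k j)
    rw [Complex.conj_im]
    simpa using hnum k j
  have hskey : ∀ (k : Fin m₁) (j : Fin n),
      ((starRingEnd ℂ) (e k j) * ((s k j : ℂ) * v k - 1)).im = 0 := by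
    intro k j
    rw [line_im, hs]
    simp only
    rw [div_mul_cancel₀ _ (hden k j)]
    ring
  set r : Fin m₁ → Fin n → ℝ := fun k j =>
    ((starRingEnd ℂ) (e k j) * ((s k j : ℂ) * v k - 1)).re / Complex.normSq (e k j) with hr
  have hu : ∀ (k : Fin m₁) (j : Fin n),
      (s k j : ℂ) * v k - 1 = (r k j : ℂ) * e k j := by
    intro k j
    rw [hr]
    simp only
    exact colinear_of_conj_mul_im (he0 k j) (hskey k j)
  have hu0 : ∀ (k : Fin m₁) (j : Fin n), (s k j : ℂ) * v k - 1 ≠ 0 := by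
    intro k j h
    rw [sub_eq_zero] at h
    have him := congrArg Complex.im h
    rw [ofReal_mul_im'] at him
    simp only [Complex.one_im] at him
    rcases mul_eq_zero.mp him with h' | h'
    · exact hs0 k j h'
    · exact hvnr k h'
  have hr0 : ∀ (k : Fin m₁) (j : Fin n), r k j ≠ 0 := by
    intro k j h
    apply hu0 k j
    rw [hu k j, h]
    simp
  have hvns : ∀ k : Fin m₁, Complex.normSq (v k) ≠ 0 :=
    fun k => (Complex.normSq_pos.mpr (hv0 k)).ne'
  have heq1 : ∀ (k : Fin m₁) (j : Fin n),
      ((((-1 : ℝ) ^ (k : ℕ) / s k j ^ m₁ : ℝ)) : ℂ) * ((s k j : ℂ) * v k) ^ m₁ = ξ := by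
    intro k j
    have hcanc : ((-1 : ℝ) ^ (k : ℕ) / s k j ^ m₁) * s k j ^ m₁ = (-1 : ℝ) ^ (k : ℕ) :=
      div_mul_cancel₀ _ (pow_ne_zero _ (hs0 k j))
    calc ((((-1 : ℝ) ^ (k : ℕ) / s k j ^ m₁ : ℝ)) : ℂ) * ((s k j : ℂ) * v k) ^ m₁
        = (((((-1 : ℝ) ^ (k : ℕ) / s k j ^ m₁) * s k j ^ m₁ : ℝ)) : ℂ)
            * ((-1 : ℂ) ^ (k : ℕ) * ξ) := by
          rw [mul_pow, hvpow]; push_cast; ring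
      _ = ξ := by rw [hcanc]; push_cast; rw [← mul_assoc, neg_one_pow_mul_self, one_mul]
  have heq2 : ∀ (k : Fin m₁) (j : Fin n),
      ((((-1 : ℝ) ^ (j : ℕ) / (s k j ^ m₂ * r k j ^ n * Complex.normSq (v k) ^ m₂) : ℝ)) : ℂ)
        * ((s k j : ℂ) * v k) ^ m₂ * ((s k j : ℂ) * v k - 1) ^ n = η := by
    intro k j
    have hD : (s k j ^ m₂ * r k j ^ n * Complex.normSq (v k) ^ m₂ : ℝ) ≠ 0 :=
      mul_ne_zero (mul_ne_zero (pow_ne_zero _ (hs0 k j)) (pow_ne_zero _ (hr0 k j)))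
        (pow_ne_zero _ (hvns k))
    have hcanc : ((-1 : ℝ) ^ (j : ℕ) / (s k j ^ m₂ * r k j ^ n * Complex.normSq (v k) ^ m₂))
        * (s k j ^ m₂ * r k j ^ n * Complex.normSq (v k) ^ m₂) = (-1 : ℝ) ^ (j : ℕ) :=
      div_mul_cancel₀ _ hD
    have hcc : v k ^ m₂ * (starRingEnd ℂ) (c k)
        = ((Complex.normSq (v k) : ℝ) : ℂ) ^ m₂ * η := by
      rw [hc]
      simp only [map_mul, map_pow, Complex.conj_conj]
      calc v k ^ m₂ * (η * ((starRingEnd ℂ) (v k)) ^ m₂)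
          = (v k * (starRingEnd ℂ) (v k)) ^ m₂ * η := by
            rw [mul_pow]; ring
        _ = ((Complex.normSq (v k) : ℝ) : ℂ) ^ m₂ * η := by rw [Complex.mul_conj]
    have hkey2 : ((s k j : ℂ) * v k) ^ m₂ * ((s k j : ℂ) * v k - 1) ^ n
        = (((s k j ^ m₂ * r k j ^ n * Complex.normSq (v k) ^ m₂ : ℝ)) : ℂ)
          * ((-1 : ℂ) ^ (j : ℕ) * η) := by
      calc ((s k j : ℂ) * v k) ^ m₂ * ((s k j : ℂ) * v k - 1) ^ n
          = ((s k j : ℂ) * v k) ^ m₂ * ((r k j : ℂ) * e k j) ^ n := by rw [hu k j]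
        _ = ((s k j : ℂ)) ^ m₂ * ((r k j : ℂ)) ^ n * (v k ^ m₂ * e k j ^ n) := by
            rw [mul_pow, mul_pow]; ring
        _ = ((s k j : ℂ)) ^ m₂ * ((r k j : ℂ)) ^ n
            * ((-1 : ℂ) ^ (j : ℕ) * (v k ^ m₂ * (starRingEnd ℂ) (c k))) := by
            rw [hepow k j]; ring
        _ = ((s k j : ℂ)) ^ m₂ * ((r k j : ℂ)) ^ n
            * ((-1 : ℂ) ^ (j : ℕ) * (((Complex.normSq (v k) : ℝ) : ℂ) ^ m₂ * η)) := by
            rw [hcc]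
        _ = (((s k j ^ m₂ * r k j ^ n * Complex.normSq (v k) ^ m₂ : ℝ)) : ℂ)
            * ((-1 : ℂ) ^ (j : ℕ) * η) := by push_cast; ring
    calc ((((-1 : ℝ) ^ (j : ℕ) / (s k j ^ m₂ * r k j ^ n * Complex.normSq (v k) ^ m₂) : ℝ)) : ℂ)
          * ((s k j : ℂ) * v k) ^ m₂ * ((s k j : ℂ) * v k - 1) ^ n
        = ((((-1 : ℝ) ^ (j : ℕ) / (s k j ^ m₂ * r k j ^ n * Complex.normSq (v k) ^ m₂) : ℝ)) : ℂ)
          * (((s k j : ℂ) * v k) ^ m₂ * ((s k j : ℂ) * v k - 1) ^ n) := by ring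
      _ = ((((-1 : ℝ) ^ (j : ℕ) / (s k j ^ m₂ * r k j ^ n * Complex.normSq (v k) ^ m₂) : ℝ)) : ℂ)
          * ((((s k j ^ m₂ * r k j ^ n * Complex.normSq (v k) ^ m₂ : ℝ)) : ℂ)
            * ((-1 : ℂ) ^ (j : ℕ) * η)) := by rw [hkey2]
      _ = (((((-1 : ℝ) ^ (j : ℕ) / (s k j ^ m₂ * r k j ^ n * Complex.normSq (v k) ^ m₂))
            * (s k j ^ m₂ * r k j ^ n * Complex.normSq (v k) ^ m₂) : ℝ)) : ℂ)
          * ((-1 : ℂ) ^ (j : ℕ) * η) := by push_cast; ring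
      _ = η := by rw [hcanc]; push_cast; rw [← mul_assoc, neg_one_pow_mul_self, one_mul]
  refine ⟨fun kj => ((-1 : ℝ) ^ (kj.1 : ℕ) / s kj.1 kj.2 ^ m₁,
      (-1 : ℝ) ^ (kj.2 : ℕ) / (s kj.1 kj.2 ^ m₂ * r kj.1 kj.2 ^ n
        * Complex.normSq (v kj.1) ^ m₂),
      (s kj.1 kj.2 : ℂ) * v kj.1), ?_, ?_⟩
  · -- injectivity
    rintro ⟨k, j⟩ ⟨k', j'⟩ hF
    simp only [Prod.mk.injEq] at hF
    obtain ⟨-, -, h3⟩ := hF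
    have hkk' : (k : ℕ) = (k' : ℕ) := by
      apply rayDir_inj h₁pos (hs0 k j) k.isLt k'.isLt
      apply mul_left_cancel₀ hw0
      calc w * ((s k j : ℂ) * rayDir m₁ (k : ℕ))
          = (s k j : ℂ) * v k := by rw [hv]; ring
        _ = (s k' j' : ℂ) * v k' := h3
        _ = w * ((s k' j' : ℂ) * rayDir m₁ (k' : ℕ)) := by rw [hv]; ring
    have hk : k = k' := Fin.ext hkk'
    subst hk
    have hss : s k j = s k j' := by
      have := mul_right_cancel₀ (hv0 k) h3
      exact_mod_cast this
    have h4 : (r k j : ℂ) * e k j = (r k j' : ℂ) * e k j' := by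
      rw [← hu k j, ← hu k j', hss]
    have hjj' : (j : ℕ) = (j' : ℕ) := by
      apply rayDir_inj hnpos (hr0 k j) j.isLt j'.isLt
      apply mul_left_cancel₀ (hd0 k)
      calc d k * ((r k j : ℂ) * rayDir n (j : ℕ))
          = (r k j : ℂ) * e k j := by rw [he]; ring
        _ = (r k j' : ℂ) * e k j' := h4
        _ = d k * ((r k j' : ℂ) * rayDir n (j' : ℕ)) := by rw [he]; ring
    have hj : j = j' := Fin.ext hjj'
    rw [hj]
  · -- set equality
    ext q
    obtain ⟨A, B, t⟩ := q
    constructor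
    · rintro ⟨ha, hb⟩
      simp only at ha hb
      rw [← hn] at hb
      have hA0 : A ≠ 0 := by
        rintro rfl
        rw [Complex.ofReal_zero, zero_mul] at ha
        exact hξ0 ha.symm
      have hA' : ((A : ℝ) : ℂ) ≠ 0 := Complex.ofReal_ne_zero.mpr hA0
      have ht0 : t ≠ 0 := by
        rintro rfl
        rw [zero_pow h₁pos.ne', mul_zero] at ha
        exact hξ0 ha.symm
      have hB0 : B ≠ 0 := by
        rintro rfl
        rw [Complex.ofReal_zero, zero_mul, zero_mul] at hb
        exact hη0 hb.symm
      have hB' : ((B : ℝ) : ℂ) ≠ 0 := Complex.ofReal_ne_zero.mpr hB0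
      have ht1 : t ≠ 1 := by
        rintro rfl
        rw [sub_self, zero_pow hnpos.ne', mul_zero] at hb
        exact hη0 hb.symm
      have hz0 : t * w⁻¹ ≠ 0 := mul_ne_zero ht0 (inv_ne_zero hw0)
      have htpow : t ^ m₁ = ξ * ((A : ℝ) : ℂ)⁻¹ := by
        rw [← ha]; field_simp
      have hzpow : (t * w⁻¹) ^ m₁ = ((A⁻¹ : ℝ) : ℂ) := by
        rw [mul_pow, inv_pow, hw, htpow]
        push_cast
        field_simp
        try ring
      have hzim : ((t * w⁻¹) ^ m₁).im = 0 := by rw [hzpow]; exact Complex.ofReal_im _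
      obtain ⟨r₁, k, hk, hr₁, hzray⟩ := ray_lemma h₁pos hz0 hzim
      set K : Fin m₁ := ⟨k, hk⟩ with hK
      have hKval : ((K : Fin m₁) : ℕ) = k := rfl
      have ht : t = (r₁ : ℂ) * v K := by
        have h5 : t = (t * w⁻¹) * w := by field_simp
        rw [h5, hzray, hv]
        simp only [hKval]
        ring
      -- second equation
      have hprod : t ^ m₂ * (t - 1) ^ n = η * ((B : ℝ) : ℂ)⁻¹ := by
        field_simp
        linear_combination hb
      have hQ : ((starRingEnd ℂ) η * (t ^ m₂ * (t - 1) ^ n)).im = 0 := by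
        rw [hprod, show (starRingEnd ℂ) η * (η * ((B : ℝ) : ℂ)⁻¹)
            = ((Complex.normSq η : ℝ) : ℂ) * ((B⁻¹ : ℝ) : ℂ) from by
          rw [Complex.normSq_eq_conj_mul_self]; push_cast; ring,
          ← Complex.ofReal_mul, Complex.ofReal_im]
      have him2 : (c K * (t - 1) ^ n).im = 0 := by
        have h5 : (starRingEnd ℂ) η * (t ^ m₂ * (t - 1) ^ n)
            = ((r₁ ^ m₂ : ℝ) : ℂ) * (c K * (t - 1) ^ n) := by
          rw [ht, hc]
          simp only
          push_cast
          ring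
        rw [h5, ofReal_mul_im'] at hQ
        rcases mul_eq_zero.mp hQ with h' | h'
        · exact absurd h' (pow_ne_zero _ hr₁)
        · exact h'
      have hz₂0 : (t - 1) * (d K)⁻¹ ≠ 0 :=
        mul_ne_zero (sub_ne_zero.mpr ht1) (inv_ne_zero (hd0 K))
      have hCc0 : (starRingEnd ℂ) (c K) ≠ 0 := by
        simpa [map_eq_zero] using hc0 K
      have hρ : c K * (t - 1) ^ n = (((c K * (t - 1) ^ n).re : ℝ) : ℂ) :=
        Complex.ext rfl (by simpa using him2)
      have hz₂pow : ((t - 1) * (d K)⁻¹) ^ n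
          = (((c K * (t - 1) ^ n).re / Complex.normSq (c K) : ℝ) : ℂ) := by
        rw [mul_pow, inv_pow, hd]
        apply mul_right_cancel₀ hCc0
        rw [inv_mul_cancel_right₀ hCc0, Complex.ofReal_div, div_mul_eq_mul_div,
          eq_comm, div_eq_iff (Complex.ofReal_ne_zero.mpr
            ((Complex.normSq_pos.mpr (hc0 K)).ne')),
          show ((Complex.normSq (c K) : ℝ) : ℂ) = c K * (starRingEnd ℂ) (c K) from
            (Complex.mul_conj (c K)).symm]
        linear_combination (starRingEnd ℂ) (c K) * hρ.symm
      have hz₂im : (((t - 1) * (d K)⁻¹) ^ n).im = 0 := by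
        rw [hz₂pow]; exact Complex.ofReal_im _
      obtain ⟨r₂, j, hj, hr₂, hz₂ray⟩ := ray_lemma hnpos hz₂0 hz₂im
      set J : Fin n := ⟨j, hj⟩ with hJ
      have hJval : ((J : Fin n) : ℕ) = j := rfl
      have htu : t - 1 = (r₂ : ℂ) * e K J := by
        have h5 : t - 1 = ((t - 1) * (d K)⁻¹) * d K := by
          rw [inv_mul_cancel_right₀ (hd0 K)]
        rw [h5, hz₂ray, he]
        simp only [hJval]
        ring
      have hlin : ((starRingEnd ℂ) (e K J) * (t - 1)).im = 0 := by
        rw [htu, show (starRingEnd ℂ) (e K J) * ((r₂ : ℂ) * e K J)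
            = ((r₂ : ℝ) : ℂ) * ((Complex.normSq (e K J) : ℝ) : ℂ) from by
          rw [show ((Complex.normSq (e K J) : ℝ) : ℂ)
              = e K J * (starRingEnd ℂ) (e K J) from (Complex.mul_conj _).symm]
          ring, ← Complex.ofReal_mul, Complex.ofReal_im]
      have hr₁s : r₁ = s K J := by
        have h5 : ((starRingEnd ℂ) (e K J) * ((r₁ : ℂ) * v K - 1)).im = 0 := by
          rw [show (r₁ : ℂ) * v K - 1 = t - 1 from by rw [ht]]
          exact hlin
        rw [line_im] at h5
        rw [hs]
        simp only
        rw [eq_div_iff (hden K J)]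
        linarith
      have htt : t = (s K J : ℂ) * v K := by rw [ht, hr₁s]
      have hAeq : A = (-1 : ℝ) ^ (K : ℕ) / s K J ^ m₁ := by
        have h5 : ((A : ℝ) : ℂ) * t ^ m₁
            = ((((-1 : ℝ) ^ (K : ℕ) / s K J ^ m₁ : ℝ)) : ℂ) * t ^ m₁ := by
          rw [ha]
          conv_rhs => rw [htt]
          rw [heq1 K J]
        have h6 := mul_right_cancel₀ (pow_ne_zero m₁ ht0) h5
        exact_mod_cast h6
      have hBeq : B = (-1 : ℝ) ^ (J : ℕ)
          / (s K J ^ m₂ * r K J ^ n * Complex.normSq (v K) ^ m₂) := by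
        have hX : t ^ m₂ * (t - 1) ^ n ≠ 0 :=
          mul_ne_zero (pow_ne_zero _ ht0) (pow_ne_zero _ (sub_ne_zero.mpr ht1))
        have h5 : ((B : ℝ) : ℂ) * (t ^ m₂ * (t - 1) ^ n)
            = ((((-1 : ℝ) ^ (J : ℕ)
              / (s K J ^ m₂ * r K J ^ n * Complex.normSq (v K) ^ m₂) : ℝ)) : ℂ)
              * (t ^ m₂ * (t - 1) ^ n) := by
          rw [← mul_assoc, hb]
          conv_rhs => rw [htt]
          rw [← mul_assoc, heq2 K J]
        have h6 := mul_right_cancel₀ hX h5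
        exact_mod_cast h6
      refine ⟨(K, J), ?_⟩
      simp only
      rw [← hAeq, ← hBeq, ← htt]
    · rintro ⟨⟨k, j⟩, hFq⟩
      rw [← hFq]
      refine ⟨heq1 k j, ?_⟩
      show _ * _ ^ m₂ * (_ - 1) ^ (m₃ - m₂) = η
      rw [← hn]
      exact heq2 k j

lemma isOpen_U (m₁ m₂ m₃ : ℕ) :
    IsOpen {p : ℂ × ℂ | p.1.im ≠ 0 ∧ p.2.im ≠ 0 ∧ ∀ v : ℂ, ‖v‖ = 1 →
      ((starRingEnd ℂ) p.1 * v ^ m₁).im = 0 →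
      ((starRingEnd ℂ) p.2 * v ^ m₂).im ≠ 0 ∧ ((starRingEnd ℂ) p.2 * v ^ m₃).im ≠ 0} := by
  have h1 : IsOpen {p : ℂ × ℂ | p.1.im ≠ 0} :=
    isOpen_ne.preimage (Complex.continuous_im.comp continuous_fst)
  have h2 : IsOpen {p : ℂ × ℂ | p.2.im ≠ 0} :=
    isOpen_ne.preimage (Complex.continuous_im.comp continuous_snd)
  have h3 : IsOpen {p : ℂ × ℂ | ∀ v : ℂ, ‖v‖ = 1 →
      ((starRingEnd ℂ) p.1 * v ^ m₁).im = 0 →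
      ((starRingEnd ℂ) p.2 * v ^ m₂).im ≠ 0 ∧ ((starRingEnd ℂ) p.2 * v ^ m₃).im ≠ 0} := by
    rw [← isClosed_compl_iff]
    have himg : {p : ℂ × ℂ | ∀ v : ℂ, ‖v‖ = 1 →
        ((starRingEnd ℂ) p.1 * v ^ m₁).im = 0 →
        ((starRingEnd ℂ) p.2 * v ^ m₂).im ≠ 0 ∧ ((starRingEnd ℂ) p.2 * v ^ m₃).im ≠ 0}ᶜ
        = Prod.fst '' {q : (ℂ × ℂ) × Metric.sphere (0 : ℂ) 1 |
            ((starRingEnd ℂ) q.1.1 * (q.2 : ℂ) ^ m₁).im = 0 ∧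
            (((starRingEnd ℂ) q.1.2 * (q.2 : ℂ) ^ m₂).im = 0 ∨
              ((starRingEnd ℂ) q.1.2 * (q.2 : ℂ) ^ m₃).im = 0)} := by
      ext p
      simp only [Set.mem_compl_iff, Set.mem_setOf_eq, Set.mem_image, not_forall]
      constructor
      · rintro ⟨v, hv1, hv2, hv3⟩
        refine ⟨(p, ⟨v, ?_⟩), ⟨hv2, ?_⟩, rfl⟩
        · rw [mem_sphere_zero_iff_norm, hv1]
        · rcases not_and_or.mp hv3 with h | h
          · exact Or.inl (not_not.mp h)
          · exact Or.inr (not_not.mp h)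
      · rintro ⟨⟨p', v⟩, ⟨hA, hBC⟩, rfl⟩
        refine ⟨(v : ℂ), ?_, hA, ?_⟩
        · have := v.2
          rw [mem_sphere_zero_iff_norm] at this
          exact this
        · rcases hBC with h | h
          · exact fun hcon => hcon.1 h
          · exact fun hcon => hcon.2 h
    rw [himg]
    apply isClosedMap_fst_of_compactSpace
    have hf1 : Continuous fun q : (ℂ × ℂ) × Metric.sphere (0 : ℂ) 1 =>
        ((starRingEnd ℂ) q.1.1 * (q.2 : ℂ) ^ m₁).im :=
      Complex.continuous_im.comp ((Complex.continuous_conj.comp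
        (continuous_fst.comp continuous_fst)).mul
        ((continuous_subtype_val.comp continuous_snd).pow m₁))
    have hf2 : Continuous fun q : (ℂ × ℂ) × Metric.sphere (0 : ℂ) 1 =>
        ((starRingEnd ℂ) q.1.2 * (q.2 : ℂ) ^ m₂).im :=
      Complex.continuous_im.comp ((Complex.continuous_conj.comp
        (continuous_snd.comp continuous_fst)).mul
        ((continuous_subtype_val.comp continuous_snd).pow m₂))
    have hf3 : Continuous fun q : (ℂ × ℂ) × Metric.sphere (0 : ℂ) 1 =>
        ((starRingEnd ℂ) q.1.2 * (q.2 : ℂ) ^ m₃).im :=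
      Complex.continuous_im.comp ((Complex.continuous_conj.comp
        (continuous_snd.comp continuous_fst)).mul
        ((continuous_subtype_val.comp continuous_snd).pow m₃))
    exact (isClosed_singleton.preimage hf1).inter
      ((isClosed_singleton.preimage hf2).union (isClosed_singleton.preimage hf3))
  exact h1.inter (h2.inter h3)


lemma dense_U (m₁ m₂ m₃ : ℕ) (h₁pos : 0 < m₁) :
    Dense {p : ℂ × ℂ | p.1.im ≠ 0 ∧ p.2.im ≠ 0 ∧ ∀ v : ℂ, ‖v‖ = 1 →
      ((starRingEnd ℂ) p.1 * v ^ m₁).im = 0 →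
      ((starRingEnd ℂ) p.2 * v ^ m₂).im ≠ 0 ∧ ((starRingEnd ℂ) p.2 * v ^ m₃).im ≠ 0} := by
  rw [Metric.dense_iff]
  intro p ε hε
  have hd1 := dense_conj_mul_im_ne (-1) (by norm_num)
  rw [Metric.dense_iff] at hd1
  obtain ⟨ξ, hξball, hξim⟩ := hd1 p.1 (ε / 2) (by positivity)
  have hξim' : ξ.im ≠ 0 := by simpa using hξim
  have hξ0 : ξ ≠ 0 := im_ne_zero_ne_zero hξim'
  obtain ⟨w, hw⟩ := IsAlgClosed.exists_pow_nat_eq ξ h₁pos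
  have hw0 : w ≠ 0 := by
    intro h; rw [h, zero_pow h₁pos.ne'] at hw; exact hξ0 hw.symm
  set L : List ℂ := (-1) :: (((List.range m₁).map fun k => (w * rayDir m₁ k) ^ m₂)
    ++ ((List.range m₁).map fun k => (w * rayDir m₁ k) ^ m₃)) with hL
  have hL0 : ∀ z ∈ L, z ≠ 0 := by
    intro z hz
    rw [hL, List.mem_cons, List.mem_append, List.mem_map, List.mem_map] at hz
    rcases hz with h | ⟨k, -, h⟩ | ⟨k, -, h⟩
    · rw [h]; norm_num
    · rw [← h]; exact pow_ne_zero _ (mul_ne_zero hw0 (rayDir_ne_zero _ _))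
    · rw [← h]; exact pow_ne_zero _ (mul_ne_zero hw0 (rayDir_ne_zero _ _))
  obtain ⟨hdense, -⟩ := dense_isOpen_list L hL0
  rw [Metric.dense_iff] at hdense
  obtain ⟨η, hηball, hηL⟩ := hdense p.2 (ε / 2) (by positivity)
  refine ⟨(ξ, η), ?_, hξim', ?_, ?_⟩
  · rw [Metric.mem_ball, Prod.dist_eq]
    rw [Metric.mem_ball] at hξball hηball
    exact max_lt (lt_of_lt_of_le hξball (by linarith)) (lt_of_lt_of_le hηball (by linarith))
  · have := hηL (-1) (by rw [hL]; exact List.mem_cons_self)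
    simpa using this
  · intro u habs hu1
    have hu0 : u ≠ 0 := by intro h0; rw [h0] at habs; simp at habs
    have hz0 : u * w⁻¹ ≠ 0 := mul_ne_zero hu0 (inv_ne_zero hw0)
    have hzim : ((u * w⁻¹) ^ m₁).im = 0 := by
      rw [mul_pow, inv_pow, hw]
      have hrw : u ^ m₁ * ξ⁻¹
          = (((Complex.normSq ξ)⁻¹ : ℝ) : ℂ) * ((starRingEnd ℂ) ξ * u ^ m₁) := by
        rw [Complex.inv_def]
        ring
      rw [hrw, ofReal_mul_im', hu1, mul_zero]
    obtain ⟨ρ, k, hk, hρ0, hzray⟩ := ray_lemma h₁pos hz0 hzim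
    have hu : u = (ρ : ℂ) * (w * rayDir m₁ k) := by
      have h5 : u = (u * w⁻¹) * w := by rw [inv_mul_cancel_right₀ hw0]
      rw [h5, hzray]; ring
    constructor
    · have h2 := hηL ((w * rayDir m₁ k) ^ m₂) (by
        rw [hL, List.mem_cons, List.mem_append, List.mem_map]
        exact Or.inr (Or.inl ⟨k, List.mem_range.mpr hk, rfl⟩))
      rw [hu, scale_im]
      exact mul_ne_zero (pow_ne_zero _ hρ0) h2
    · have h2 := hηL ((w * rayDir m₁ k) ^ m₃) (by
        rw [hL, List.mem_cons, List.mem_append, List.mem_map, List.mem_map]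
        exact Or.inr (Or.inr ⟨k, List.mem_range.mpr hk, rfl⟩))
      rw [hu, scale_im]
      exact mul_ne_zero (pow_ne_zero _ hρ0) h2

/-- Let `m₁`, `m₂` be odd positive integers and `m₃` an even positive integer
with `m₂ < m₃` and `m₁ < m₃`. Then there is an open dense subset `U` of `ℂ²`,
contained in `(ℂ \ ℝ) × (ℂ \ ℝ)`, such that for every `(ξ, η) ∈ U` the set of
triples `(a, b, τ) ∈ ℝ × ℝ × ℂ` with `a·τ^{m₁} = ξ` and
`b·τ^{m₂}·(τ − 1)^{m₃ − m₂} = η` is finite with exactly `m₁·(m₃ − m₂)`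
elements. -/
theorem stmt4_count (m₁ m₂ m₃ : ℕ)
    (h₁odd : Odd m₁) (h₂odd : Odd m₂) (h₃even : Even m₃)
    (h₁pos : 0 < m₁) (h₂pos : 0 < m₂) (h₃pos : 0 < m₃)
    (h₂₃ : m₂ < m₃) (h₁₃ : m₁ < m₃) :
    ∃ U : Set (ℂ × ℂ), IsOpen U ∧ Dense U ∧
      (∀ p ∈ U, p.1.im ≠ 0 ∧ p.2.im ≠ 0) ∧
      ∀ p ∈ U, (stmt4Set m₁ m₂ m₃ p.1 p.2).Finite ∧
        (stmt4Set m₁ m₂ m₃ p.1 p.2).ncard = m₁ * (m₃ - m₂) := by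
  refine ⟨{p : ℂ × ℂ | p.1.im ≠ 0 ∧ p.2.im ≠ 0 ∧ ∀ v : ℂ, ‖v‖ = 1 →
      ((starRingEnd ℂ) p.1 * v ^ m₁).im = 0 →
      ((starRingEnd ℂ) p.2 * v ^ m₂).im ≠ 0 ∧ ((starRingEnd ℂ) p.2 * v ^ m₃).im ≠ 0},
    isOpen_U m₁ m₂ m₃, dense_U m₁ m₂ m₃ h₁pos, ?_, ?_⟩
  · rintro ⟨ξ, η⟩ ⟨h1, h2, -⟩
    exact ⟨h1, h2⟩
  · rintro ⟨ξ, η⟩ ⟨h1, h2, h3⟩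
    have hW : ∀ v : ℂ, v ≠ 0 → ((starRingEnd ℂ) ξ * v ^ m₁).im = 0 →
        ((starRingEnd ℂ) η * v ^ m₂).im ≠ 0 ∧ ((starRingEnd ℂ) η * v ^ m₃).im ≠ 0 := by
      intro v hv0 him
      have habs : ‖v‖ ≠ 0 := by simpa using hv0
      have habspos : 0 < ‖v‖ := lt_of_le_of_ne (norm_nonneg v) (Ne.symm habs)
      have habs' : ‖(((‖v‖)⁻¹ : ℝ) : ℂ) * v‖ = 1 := by
        rw [norm_mul, Complex.norm_real, Real.norm_eq_abs, abs_of_pos (by positivity)]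
        field_simp
      have hv' : v = ((‖v‖ : ℝ) : ℂ) * ((((‖v‖)⁻¹ : ℝ) : ℂ) * v) := by
        rw [← mul_assoc, ← Complex.ofReal_mul, mul_inv_cancel₀ habs]
        simp
      have him' : ((starRingEnd ℂ) ξ * (((((‖v‖)⁻¹ : ℝ) : ℂ) * v)) ^ m₁).im = 0 := by
        rw [scale_im, him, mul_zero]
      obtain ⟨hB, hC⟩ := h3 ((((‖v‖)⁻¹ : ℝ) : ℂ) * v) habs' him'
      constructor
      · rw [hv', scale_im]
        exact mul_ne_zero (pow_ne_zero _ habs) hB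
      · rw [hv', scale_im]
        exact mul_ne_zero (pow_ne_zero _ habs) hC
    obtain ⟨F, hFinj, hFset⟩ := counting m₁ m₂ m₃ h₁pos h₂₃ ξ η h1 h2 hW
    constructor
    · rw [hFset]; exact Set.finite_range F
    · rw [hFset, ← Nat.card_coe_set_eq, Nat.card_range_of_injective hFinj]
      simp [Nat.card_eq_fintype_card]
end

section
/- Let m₁, m₂, m₃ be integers with 0 ≤ m₂ < m₃ and 0 < m₁ < 2m₃. Then there exists an open subset U of ℂ², dense in ℂ² and contained in (ℂ \ ℝ) × (ℂ \ ℝ), such that for every (λ, μ) ∈ U the set of triples (a, b, κ) with a, b ∈ ℝ \ {0} and κ ∈ ℂ \ ℝ satisfying (b/a)·(κ − κ̄)^{m₂ − m₁}·(κ² + 1)^{m₃ − m₂} = λ and a·(i − κ)^{m₁}·(i − κ̄)^{m₁} = μ is finite. (Here κ̄ denotes the complex conjugate of κ, i = √−1, and the exponent m₂ − m₁ may be a negative integer, interpreted as an integer power of the nonzero complex number κ − κ̄.) -/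
open Complex Polynomial

private lemma finite_pow_eq' (M : ℕ) (hM : 0 < M) (t : ℂ) :
    {u : ℂ | u ^ M = t}.Finite := by
  apply (Polynomial.finite_setOf_isRoot (X_pow_sub_C_ne_zero hM t)).subset
  intro u hu
  simp only [Set.mem_setOf_eq] at hu ⊢
  simp [IsRoot, hu]

private lemma finite_quadratic' (A B D : ℂ) (hA : A ≠ 0) :
    {x : ℂ | A * x ^ 2 + B * x + D = 0}.Finite := by
  have hp : (C A * X ^ 2 + C B * X + C D : ℂ[X]) ≠ 0 := by
    intro h
    have := congrArg (fun p => Polynomial.coeff p 2) h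
    simp [coeff_C, coeff_X, coeff_X_pow] at this
    exact hA this
  apply (Polynomial.finite_setOf_isRoot hp).subset
  intro x hx
  simp only [Set.mem_setOf_eq] at hx ⊢
  simp [IsRoot, hx]

private lemma w_eq' (κ : ℂ) :
    (I - κ) * (I - (starRingEnd ℂ) κ)
      = ((κ.re ^ 2 + κ.im ^ 2 - 1 : ℝ) : ℂ) - 2 * (κ.re : ℂ) * I := by
  apply Complex.ext <;>
    simp [Complex.mul_re, Complex.mul_im, pow_two] <;> ring

private lemma c_eq' (κ : ℂ) :
    κ ^ 2 + 1 = ((κ.re ^ 2 - κ.im ^ 2 + 1 : ℝ) : ℂ) + 2 * (κ.re : ℂ) * (κ.im : ℂ) * I := by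
  apply Complex.ext <;>
    simp [pow_two, Complex.mul_re, Complex.mul_im] <;> ring

private lemma finite_S' (u v : ℂ) (hu0 : u ≠ 0) (hu1 : u ≠ 1) (hv1 : v ≠ 1) (hvm1 : v ≠ -1) :
    {κ : ℂ | κ.re ≠ 0 ∧
      (I - κ) * (I - (starRingEnd ℂ) κ)
        = u * (starRingEnd ℂ) ((I - κ) * (I - (starRingEnd ℂ) κ)) ∧
      κ ^ 2 + 1 = v * (starRingEnd ℂ) (κ ^ 2 + 1)}.Finite := by
  set G : ℂ := 2 * I * (1 + u) / (1 - u) with hG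
  set H : ℂ := 2 * I * (1 + v) / (1 - v) with hH
  have h2I : (2 : ℂ) * I ≠ 0 := by simp [I_ne_zero]
  have h1u : (1 : ℂ) - u ≠ 0 := sub_ne_zero.2 (Ne.symm hu1)
  have h1v : (1 : ℂ) - v ≠ 0 := sub_ne_zero.2 (Ne.symm hv1)
  have hGmul : G * (1 - u) = 2 * I * (1 + u) := by rw [hG]; field_simp
  have hHmul : H * (1 - v) = 2 * I * (1 + v) := by rw [hH]; field_simp
  have hHne : H ≠ 0 := by
    intro h
    rw [h, zero_mul] at hHmul
    have h1pv : (1 : ℂ) + v = 0 := by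
      rcases mul_eq_zero.1 hHmul.symm with h' | h'
      · exact absurd h' h2I
      · exact h'
    exact hvm1 (by linear_combination h1pv)
  have hG24 : G ^ 2 + 4 ≠ 0 := by
    intro h
    have hfac : (G - 2 * I) * (G + 2 * I) = 0 := by
      linear_combination h - 4 * I_sq
    rcases mul_eq_zero.1 hfac with h2 | h2
    · have hGe : G = 2 * I := by linear_combination h2
      rw [hGe] at hGmul
      have := mul_left_cancel₀ h2I hGmul
      exact hu0 (by linear_combination -(1/2 : ℂ) * this)
    · have hGe : G = -(2 * I) := by linear_combination h2
      rw [hGe] at hGmul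
      have h4I : (4 : ℂ) * I = 0 := by linear_combination -hGmul
      simp [I_ne_zero] at h4I
  have key : ∀ κ : ℂ, κ.re ≠ 0 →
      (I - κ) * (I - (starRingEnd ℂ) κ)
        = u * (starRingEnd ℂ) ((I - κ) * (I - (starRingEnd ℂ) κ)) →
      κ ^ 2 + 1 = v * (starRingEnd ℂ) (κ ^ 2 + 1) →
      ((κ.im : ℂ) * H = G - 2 * (κ.re : ℂ) ∧
        (κ.re : ℂ) ^ 2 + (κ.im : ℂ) ^ 2 - 1 = (κ.re : ℂ) * G) := by
    intro κ hre hw hc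
    have hrne : (κ.re : ℂ) ≠ 0 := Complex.ofReal_ne_zero.2 hre
    rw [w_eq'] at hw
    rw [c_eq'] at hc
    simp only [map_sub, map_add, map_mul, map_ofNat, conj_ofReal, conj_I, mul_neg,
      sub_neg_eq_add] at hw hc
    have hpcX : ((κ.re ^ 2 + κ.im ^ 2 - 1 : ℝ) : ℂ) = (κ.re : ℂ) ^ 2 + (κ.im : ℂ) ^ 2 - 1 := by
      push_cast; ring
    have hpcY : ((κ.re ^ 2 - κ.im ^ 2 + 1 : ℝ) : ℂ) = (κ.re : ℂ) ^ 2 - (κ.im : ℂ) ^ 2 + 1 := by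
      push_cast; ring
    have hw2 : ((κ.re ^ 2 + κ.im ^ 2 - 1 : ℝ) : ℂ) * (1 - u)
        = 2 * (κ.re : ℂ) * I * (1 + u) := by linear_combination hw
    have hc2 : ((κ.re ^ 2 - κ.im ^ 2 + 1 : ℝ) : ℂ) * (1 - v)
        = -(2 * (κ.re : ℂ) * (κ.im : ℂ) * I) * (1 + v) := by linear_combination hc
    have E1 : (κ.re : ℂ) ^ 2 + (κ.im : ℂ) ^ 2 - 1 = (κ.re : ℂ) * G := by
      apply mul_right_cancel₀ h1u
      linear_combination hw2 - (κ.re : ℂ) * hGmul - (1 - u) * hpcX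
    have E2 : (κ.re : ℂ) ^ 2 - (κ.im : ℂ) ^ 2 + 1
        = -((κ.re : ℂ) * (κ.im : ℂ)) * H := by
      apply mul_right_cancel₀ h1v
      linear_combination hc2 + (κ.re : ℂ) * (κ.im : ℂ) * hHmul - (1 - v) * hpcY
    have h0 : (κ.re : ℂ) * (2 * (κ.re : ℂ) - G + (κ.im : ℂ) * H) = 0 := by
      linear_combination E1 + E2
    have h3 := (mul_eq_zero.1 h0).resolve_left hrne
    exact ⟨by linear_combination h3, E1⟩
  rcases eq_or_ne (H ^ 2 + 4) 0 with hA | hA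
  · apply Set.Finite.subset Set.finite_empty
    rintro κ ⟨hre, hw, hc⟩
    exfalso
    obtain ⟨hk, hE1⟩ := key κ hre hw hc
    have hq : (H ^ 2 + 4) * (κ.re : ℂ) ^ 2 + (-(H ^ 2 + 4) * G) * (κ.re : ℂ)
        + (G ^ 2 - H ^ 2) = 0 := by
      linear_combination H ^ 2 * hE1 - ((κ.im : ℂ) * H + G - 2 * (κ.re : ℂ)) * hk
    exact hG24 (by linear_combination hq + (1 - (κ.re : ℂ) ^ 2 + G * (κ.re : ℂ)) * hA)
  · have fin2 : {x : ℝ | (H ^ 2 + 4) * (x : ℂ) ^ 2 + (-(H ^ 2 + 4) * G) * (x : ℂ)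
        + (G ^ 2 - H ^ 2) = 0}.Finite := by
      apply Set.Finite.preimage (Complex.ofReal_injective.injOn)
        (finite_quadratic' (H ^ 2 + 4) (-(H ^ 2 + 4) * G) (G ^ 2 - H ^ 2) hA)
    apply Set.Finite.of_finite_image (f := fun κ : ℂ => κ.re)
    · apply fin2.subset
      rintro x ⟨κ, ⟨hre, hw, hc⟩, rfl⟩
      obtain ⟨hk, hE1⟩ := key κ hre hw hc
      show (H ^ 2 + 4) * (κ.re : ℂ) ^ 2 + (-(H ^ 2 + 4) * G) * (κ.re : ℂ)
        + (G ^ 2 - H ^ 2) = 0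
      linear_combination H ^ 2 * hE1 - ((κ.im : ℂ) * H + G - 2 * (κ.re : ℂ)) * hk
    · rintro κ₁ ⟨hre₁, hw₁, hc₁⟩ κ₂ ⟨hre₂, hw₂, hc₂⟩ hre
      simp only at hre
      obtain ⟨hk₁, -⟩ := key κ₁ hre₁ hw₁ hc₁
      obtain ⟨hk₂, -⟩ := key κ₂ hre₂ hw₂ hc₂
      rw [hre] at hk₁
      have : (κ₁.im : ℂ) = (κ₂.im : ℂ) :=
        mul_right_cancel₀ hHne (hk₁.trans hk₂.symm)
      exact Complex.ext hre (Complex.ofReal_injective this)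

/-- The set of triples `(a, b, κ)` with `a, b ∈ ℝ \ {0}`, `κ ∈ ℂ \ ℝ`,
satisfying `(b/a)·(κ − κ̄)^{m₂ − m₁}·(κ² + 1)^{m₃ − m₂} = λ` and
`a·(i − κ)^{m₁}·(i − κ̄)^{m₁} = μ`; the possibly negative exponent `m₂ − m₁`
is interpreted as an integer power of the nonzero complex number `κ − κ̄`. -/
def stmt5Set (m₁ m₂ m₃ : ℤ) (lam μ : ℂ) : Set (ℝ × ℝ × ℂ) :=
  {q | q.1 ≠ 0 ∧ q.2.1 ≠ 0 ∧ q.2.2.im ≠ 0 ∧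
    ((q.2.1 : ℂ) / (q.1 : ℂ)) * (q.2.2 - (starRingEnd ℂ) q.2.2) ^ (m₂ - m₁) *
      (q.2.2 ^ 2 + 1) ^ (m₃ - m₂) = lam ∧
    (q.1 : ℂ) * (I - q.2.2) ^ m₁ * (I - (starRingEnd ℂ) q.2.2) ^ m₁ = μ}

private lemma stmt5_mem_aux (m₁ m₂ m₃ : ℤ) (h₂₃ : m₂ < m₃) (h₁ : 0 < m₁) (lam μ : ℂ)
    (hlim : lam.im ≠ 0) (hmim : μ.im ≠ 0)
    (a b : ℝ) (κ : ℂ) (hq : (a, b, κ) ∈ stmt5Set m₁ m₂ m₃ lam μ) :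
    ∃ u v : ℂ,
      u ^ m₁.toNat = μ / (starRingEnd ℂ) μ ∧
      v ^ (m₃ - m₂).toNat = (-1 : ℂ) ^ (m₁ - m₂) * (lam / (starRingEnd ℂ) lam) ∧
      κ.re ≠ 0 ∧
      (I - κ) * (I - (starRingEnd ℂ) κ)
        = u * (starRingEnd ℂ) ((I - κ) * (I - (starRingEnd ℂ) κ)) ∧
      κ ^ 2 + 1 = v * (starRingEnd ℂ) (κ ^ 2 + 1) := by
  obtain ⟨ha, hb, him, he1, he2⟩ := hq
  simp only at ha hb him he1 he2
  have hm0 : μ ≠ 0 := fun h => hmim (by simp [h])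
  have hl0 : lam ≠ 0 := fun h => hlim (by simp [h])
  have hmc0 : (starRingEnd ℂ) μ ≠ 0 := by
    intro h; apply hm0
    simpa [Complex.conj_conj] using congrArg (starRingEnd ℂ) h
  have hlc0 : (starRingEnd ℂ) lam ≠ 0 := by
    intro h; apply hl0
    simpa [Complex.conj_conj] using congrArg (starRingEnd ℂ) h
  have ha' : (a : ℂ) ≠ 0 := Complex.ofReal_ne_zero.2 ha
  have hba' : (b : ℂ) / (a : ℂ) ≠ 0 :=
    div_ne_zero (Complex.ofReal_ne_zero.2 hb) ha'
  set w : ℂ := (I - κ) * (I - (starRingEnd ℂ) κ) with hwdef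
  set cc : ℂ := κ ^ 2 + 1 with hccdef
  set zz : ℂ := κ - (starRingEnd ℂ) κ with hzzdef
  have hw1 : (a : ℂ) * w ^ m₁ = μ := by
    rw [hwdef, mul_zpow, ← mul_assoc]; exact he2
  have hw2 : (a : ℂ) * ((starRingEnd ℂ) w) ^ m₁ = (starRingEnd ℂ) μ := by
    have := congrArg (starRingEnd ℂ) hw1
    simpa [map_mul, map_zpow₀, Complex.conj_ofReal] using this
  have hwne : w ≠ 0 := by
    intro h
    rw [h, zero_zpow m₁ h₁.ne', mul_zero] at hw1
    exact hm0 hw1.symm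
  have hwcne : (starRingEnd ℂ) w ≠ 0 := by
    intro h
    rw [h, zero_zpow m₁ h₁.ne', mul_zero] at hw2
    exact hmc0 hw2.symm
  have hzzne : zz ≠ 0 := by
    rw [hzzdef, Complex.sub_conj]
    simp [him, I_ne_zero]
  have hccne : cc ≠ 0 := by
    intro h
    rw [h, zero_zpow (m₃ - m₂) (by omega), mul_zero] at he1
    exact hl0 he1.symm
  have hcccne : (starRingEnd ℂ) cc ≠ 0 := by
    intro h; apply hccne
    simpa [Complex.conj_conj] using congrArg (starRingEnd ℂ) h
  have he1' : ((b : ℂ) / (a : ℂ)) * zz ^ (m₂ - m₁) * cc ^ (m₃ - m₂) = lam := he1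
  have hconj1 : ((b : ℂ) / (a : ℂ)) * ((starRingEnd ℂ) zz) ^ (m₂ - m₁) *
      ((starRingEnd ℂ) cc) ^ (m₃ - m₂) = (starRingEnd ℂ) lam := by
    have := congrArg (starRingEnd ℂ) he1'
    simpa [map_mul, map_div₀, map_zpow₀, Complex.conj_ofReal] using this
  have hzzconj : (starRingEnd ℂ) zz = -zz := by
    rw [hzzdef, map_sub, Complex.conj_conj]; ring
  rw [hzzconj, neg_eq_neg_one_mul, mul_zpow] at hconj1
  refine ⟨w / (starRingEnd ℂ) w, cc / (starRingEnd ℂ) cc, ?_, ?_, ?_, ?_, ?_⟩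
  · have hcross : w ^ m₁ * (starRingEnd ℂ) μ = ((starRingEnd ℂ) w) ^ m₁ * μ := by
      linear_combination ((starRingEnd ℂ) w) ^ m₁ * hw1 - w ^ m₁ * hw2
    have hu : (w / (starRingEnd ℂ) w) ^ m₁ = μ / (starRingEnd ℂ) μ := by
      rw [div_zpow, div_eq_div_iff (zpow_ne_zero m₁ hwcne) hmc0]
      linear_combination hcross
    rw [← hu, ← zpow_natCast]
    congr 1
    exact Int.toNat_of_nonneg h₁.le
  · have hcross : zz ^ (m₂ - m₁) * cc ^ (m₃ - m₂) * (starRingEnd ℂ) lam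
        = (-1 : ℂ) ^ (m₂ - m₁) * zz ^ (m₂ - m₁) * ((starRingEnd ℂ) cc) ^ (m₃ - m₂) * lam := by
      linear_combination ((-1 : ℂ) ^ (m₂ - m₁) * zz ^ (m₂ - m₁) *
        ((starRingEnd ℂ) cc) ^ (m₃ - m₂)) * he1'
        - (zz ^ (m₂ - m₁) * cc ^ (m₃ - m₂)) * hconj1
    have hzzp : zz ^ (m₂ - m₁) ≠ 0 := zpow_ne_zero _ hzzne
    have hcross2 : cc ^ (m₃ - m₂) * (starRingEnd ℂ) lam
        = (-1 : ℂ) ^ (m₂ - m₁) * ((starRingEnd ℂ) cc) ^ (m₃ - m₂) * lam := by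
      apply mul_left_cancel₀ hzzp
      linear_combination hcross
    have hee : (-1 : ℂ) ^ (m₂ - m₁) = (-1 : ℂ) ^ (m₁ - m₂) := by
      rw [show m₂ - m₁ = -(m₁ - m₂) by ring, zpow_neg]
      rcases Int.even_or_odd (m₁ - m₂) with hpar | hpar
      · rw [hpar.neg_one_zpow]; norm_num
      · rw [hpar.neg_one_zpow]; norm_num
    have hv : (cc / (starRingEnd ℂ) cc) ^ (m₃ - m₂)
        = (-1 : ℂ) ^ (m₁ - m₂) * (lam / (starRingEnd ℂ) lam) := by
      have hrhs : (-1 : ℂ) ^ (m₁ - m₂) * (lam / (starRingEnd ℂ) lam)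
          = ((-1 : ℂ) ^ (m₂ - m₁) * lam) / (starRingEnd ℂ) lam := by
        rw [hee]; ring
      rw [hrhs, div_zpow, div_eq_div_iff (zpow_ne_zero _ hcccne) hlc0]
      linear_combination hcross2
    rw [← hv, ← zpow_natCast]
    congr 1
    omega
  · intro h0
    have hwreal : (starRingEnd ℂ) w = w := by
      rw [hwdef, w_eq', h0]
      simp [map_sub, Complex.conj_ofReal]
    rw [hwreal] at hw2
    have : μ = (starRingEnd ℂ) μ := hw1.symm.trans hw2
    exact hmim ((Complex.conj_eq_iff_im).1 this.symm)
  · exact (div_mul_cancel₀ w hwcne).symm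
  · exact (div_mul_cancel₀ cc hcccne).symm

private lemma stmt5_finite_aux (m₁ m₂ m₃ : ℤ) (h₂₃ : m₂ < m₃) (h₁ : 0 < m₁)
    (lam μ : ℂ) (hlre : lam.re ≠ 0) (hlim : lam.im ≠ 0) (hmim : μ.im ≠ 0) :
    (stmt5Set m₁ m₂ m₃ lam μ).Finite := by
  have hm0 : μ ≠ 0 := fun h => hmim (by simp [h])
  have hl0 : lam ≠ 0 := fun h => hlim (by simp [h])
  have hmc0 : (starRingEnd ℂ) μ ≠ 0 := by
    intro h; apply hm0
    simpa [Complex.conj_conj] using congrArg (starRingEnd ℂ) h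
  have hlc0 : (starRingEnd ℂ) lam ≠ 0 := by
    intro h; apply hl0
    simpa [Complex.conj_conj] using congrArg (starRingEnd ℂ) h
  set e : ℂ := (-1 : ℂ) ^ (m₁ - m₂) with hedef
  have hepm : e = 1 ∨ e = -1 := by
    rcases Int.even_or_odd (m₁ - m₂) with hpar | hpar
    · exact Or.inl hpar.neg_one_zpow
    · exact Or.inr hpar.neg_one_zpow
  have hpm : ∀ c : ℂ, c = 1 ∨ c = -1 → e * (lam / (starRingEnd ℂ) lam) ≠ c := by
    intro c hc h
    have h' : e * lam = c * (starRingEnd ℂ) lam := by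
      have h2 : (e * (lam / (starRingEnd ℂ) lam)) * (starRingEnd ℂ) lam
          = c * (starRingEnd ℂ) lam := by rw [h]
      calc e * lam = (e * (lam / (starRingEnd ℂ) lam)) * (starRingEnd ℂ) lam := by
            field_simp
        _ = c * (starRingEnd ℂ) lam := h2
    rcases hepm with he | he <;> rcases hc with hc | hc <;> rw [he, hc] at h'
    · have hcj : (starRingEnd ℂ) lam = lam := by linear_combination -h'
      exact hlim ((Complex.conj_eq_iff_im).1 hcj)
    · have hre2 : lam = -(starRingEnd ℂ) lam := by linear_combination h'
      have h3 := congrArg Complex.re hre2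
      simp only [Complex.neg_re, Complex.conj_re] at h3
      exact hlre (by linarith)
    · have hre2 : lam = -(starRingEnd ℂ) lam := by linear_combination -h'
      have h3 := congrArg Complex.re hre2
      simp only [Complex.neg_re, Complex.conj_re] at h3
      exact hlre (by linarith)
    · have hcj : (starRingEnd ℂ) lam = lam := by linear_combination h'
      exact hlim ((Complex.conj_eq_iff_im).1 hcj)
  set M : ℕ := m₁.toNat with hMdef
  set N : ℕ := (m₃ - m₂).toNat with hNdef
  have hM : 0 < M := by omega
  have hN : 0 < N := by omega
  set Uhat : Set ℂ := {u : ℂ | u ^ M = μ / (starRingEnd ℂ) μ} with hUdef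
  set Vhat : Set ℂ := {v : ℂ | v ^ N = e * (lam / (starRingEnd ℂ) lam)} with hVdef
  have finU : Uhat.Finite := finite_pow_eq' M hM _
  have finV : Vhat.Finite := finite_pow_eq' N hN _
  have finBig : (⋃ u ∈ Uhat, ⋃ v ∈ Vhat,
      {κ : ℂ | κ.re ≠ 0 ∧
        (I - κ) * (I - (starRingEnd ℂ) κ)
          = u * (starRingEnd ℂ) ((I - κ) * (I - (starRingEnd ℂ) κ)) ∧
        κ ^ 2 + 1 = v * (starRingEnd ℂ) (κ ^ 2 + 1)}).Finite := by
    apply Set.Finite.biUnion finU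
    intro u hu
    apply Set.Finite.biUnion finV
    intro v hv
    have hu' : u ^ M = μ / (starRingEnd ℂ) μ := hu
    have hv' : v ^ N = e * (lam / (starRingEnd ℂ) lam) := hv
    apply finite_S'
    · intro h
      rw [h, zero_pow hM.ne'] at hu'
      rcases div_eq_zero_iff.1 hu'.symm with h' | h'
      · exact hm0 h'
      · exact hmc0 h'
    · intro h
      rw [h, one_pow] at hu'
      have hcj : (starRingEnd ℂ) μ = μ := by
        field_simp at hu'
        exact hu'
      exact hmim ((Complex.conj_eq_iff_im).1 hcj)
    · intro h
      rw [h, one_pow] at hv'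
      exact hpm 1 (Or.inl rfl) hv'.symm
    · intro h
      rw [h] at hv'
      rcases neg_one_pow_eq_or ℂ N with h' | h'
      · exact hpm 1 (Or.inl rfl) (hv'.symm.trans h')
      · exact hpm (-1) (Or.inr rfl) (hv'.symm.trans h')
  apply Set.Finite.of_finite_image (f := fun q : ℝ × ℝ × ℂ => q.2.2)
  · apply finBig.subset
    rintro x ⟨⟨a, b, κ⟩, hq, rfl⟩
    obtain ⟨u, v, hu, hv, h3, h4, h5⟩ :=
      stmt5_mem_aux m₁ m₂ m₃ h₂₃ h₁ lam μ hlim hmim a b κ hq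
    simp only [Set.mem_iUnion, Set.mem_setOf_eq]
    exact ⟨u, hu, v, hv, h3, h4, h5⟩
  · rintro ⟨a₁, b₁, κ₁⟩ ⟨ha₁, hb₁, him₁, he1₁, he2₁⟩ ⟨a₂, b₂, κ₂⟩ ⟨ha₂, hb₂, him₂, he1₂, he2₂⟩ hκ
    simp only at hκ
    subst hκ
    simp only at he1₁ he2₁ he1₂ he2₂ ha₁ hb₁ ha₂ hb₂
    have ha₁' : (a₁ : ℂ) ≠ 0 := Complex.ofReal_ne_zero.2 ha₁
    have ha₂' : (a₂ : ℂ) ≠ 0 := Complex.ofReal_ne_zero.2 ha₂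
    set P : ℂ := (I - κ₁) ^ m₁ * (I - (starRingEnd ℂ) κ₁) ^ m₁ with hP
    have hP1 : (a₁ : ℂ) * P = μ := by rw [hP, ← mul_assoc]; exact he2₁
    have hP2 : (a₂ : ℂ) * P = μ := by rw [hP, ← mul_assoc]; exact he2₂
    have hPne : P ≠ 0 := by
      intro h; rw [h, mul_zero] at hP1; exact hm0 hP1.symm
    have ha : (a₁ : ℂ) = (a₂ : ℂ) := mul_right_cancel₀ hPne (hP1.trans hP2.symm)
    set Z : ℂ := (κ₁ - (starRingEnd ℂ) κ₁) ^ (m₂ - m₁) * (κ₁ ^ 2 + 1) ^ (m₃ - m₂) with hZ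
    have hZ1 : ((b₁ : ℂ) / (a₁ : ℂ)) * Z = lam := by rw [hZ, ← mul_assoc]; exact he1₁
    have hZ2 : ((b₂ : ℂ) / (a₂ : ℂ)) * Z = lam := by rw [hZ, ← mul_assoc]; exact he1₂
    have hZne : Z ≠ 0 := by
      intro h; rw [h, mul_zero] at hZ1; exact hl0 hZ1.symm
    rw [← ha] at hZ2
    have hdiv : (b₁ : ℂ) / (a₁ : ℂ) = (b₂ : ℂ) / (a₁ : ℂ) :=
      mul_right_cancel₀ hZne (hZ1.trans hZ2.symm)
    have hb : b₁ = b₂ := by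
      field_simp at hdiv; exact_mod_cast hdiv
    exact Prod.ext (Complex.ofReal_injective ha) (Prod.ext hb rfl)

/-- Let `m₁, m₂, m₃` be integers with `0 ≤ m₂ < m₃` and `0 < m₁ < 2m₃`. Then
there is an open dense subset `U` of `ℂ²`, contained in `(ℂ \ ℝ) × (ℂ \ ℝ)`,
such that for every `(λ, μ) ∈ U` the set of triples `(a, b, κ)` with
`a, b ∈ ℝ*`, `κ ∈ ℂ \ ℝ`, `(b/a)·(κ − κ̄)^{m₂ − m₁}·(κ² + 1)^{m₃ − m₂} = λ`
and `a·(i − κ)^{m₁}·(i − κ̄)^{m₁} = μ` is finite. -/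
theorem stmt5_finite (m₁ m₂ m₃ : ℤ)
    (h₂ : 0 ≤ m₂) (h₂₃ : m₂ < m₃) (h₁ : 0 < m₁) (h₁₃ : m₁ < 2 * m₃) :
    ∃ U : Set (ℂ × ℂ), IsOpen U ∧ Dense U ∧
      (∀ p ∈ U, p.1.im ≠ 0 ∧ p.2.im ≠ 0) ∧
      ∀ p ∈ U, (stmt5Set m₁ m₂ m₃ p.1 p.2).Finite := by
  refine ⟨{p : ℂ × ℂ | p.1.re ≠ 0 ∧ p.1.im ≠ 0 ∧ p.2.im ≠ 0}, ?_, ?_, ?_, ?_⟩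
  · have h1 : IsOpen {p : ℂ × ℂ | p.1.re ≠ 0} :=
      isOpen_compl_singleton.preimage (Complex.continuous_re.comp continuous_fst)
    have h2 : IsOpen {p : ℂ × ℂ | p.1.im ≠ 0} :=
      isOpen_compl_singleton.preimage (Complex.continuous_im.comp continuous_fst)
    have h3 : IsOpen {p : ℂ × ℂ | p.2.im ≠ 0} :=
      isOpen_compl_singleton.preimage (Complex.continuous_im.comp continuous_snd)
    exact h1.inter (h2.inter h3)
  · rw [Metric.dense_iff]
    intro p ε hε
    have hinf : (Set.Ioo (0 : ℝ) (ε / 2) \ {-p.1.re, -p.1.im, -p.2.im}).Infinite :=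
      (Set.Ioo_infinite (by linarith)).diff (Set.toFinite _)
    obtain ⟨δ, hδ⟩ := hinf.nonempty
    obtain ⟨⟨hδ0, hδε⟩, hδne⟩ := hδ
    simp only [Set.mem_insert_iff, Set.mem_singleton_iff, not_or] at hδne
    obtain ⟨hne1, hne2, hne3⟩ := hδne
    refine ⟨(p.1 + δ + δ * I, p.2 + δ * I), ?_, ?_⟩
    · rw [Metric.mem_ball, Prod.dist_eq]
      have d1 : dist (p.1 + δ + δ * I) p.1 = ‖(δ : ℂ) + δ * I‖ := by
        rw [Complex.dist_eq]; ring_nf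
      have d2 : dist (p.2 + δ * I) p.2 = ‖(δ : ℂ) * I‖ := by
        rw [Complex.dist_eq]; ring_nf
      have b1 : ‖(δ : ℂ) + δ * I‖ < ε := by
        calc ‖(δ : ℂ) + δ * I‖ ≤ ‖(δ : ℂ)‖ + ‖(δ : ℂ) * I‖ :=
              norm_add_le _ _
          _ = δ + δ := by simp [abs_of_pos hδ0]
          _ < ε := by linarith
      have b2 : ‖(δ : ℂ) * I‖ < ε := by
        simp [abs_of_pos hδ0]; linarith
      simp only [d1, d2]
      exact max_lt b1 b2
    · refine ⟨?_, ?_, ?_⟩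
      · simp only [Complex.add_re, Complex.ofReal_re, Complex.mul_re, Complex.I_re,
          Complex.I_im, Complex.ofReal_im]
        intro h; apply hne1; linarith [h]
      · simp only [Complex.add_im, Complex.ofReal_im, Complex.mul_im, Complex.I_re,
          Complex.I_im, Complex.ofReal_re]
        intro h; apply hne2; linarith [h]
      · simp only [Complex.add_im, Complex.ofReal_im, Complex.mul_im, Complex.I_re,
          Complex.I_im, Complex.ofReal_re]
        intro h; apply hne3; linarith [h]
  · rintro p ⟨-, h2, h3⟩
    exact ⟨h2, h3⟩
  · rintro p ⟨h1p, h2p, h3p⟩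
    exact stmt5_finite_aux m₁ m₂ m₃ h₂₃ h₁ p.1 p.2 h1p h2p h3p
end
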